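/- arXiv:2502.16039 — 10 statements merged into one kernel-verified Lean document; each statement's English description precedes it below -/
import Mathlib

section
/- Let n ≥ 2 be an integer, p > 0 and 0 < q < (p+2n)/p, and define f(α,β) := (1+α²)^{(pq−p−2n)/2} β^{−q} for α ≥ 0, β > 0. Then f satisfies Condition (F): for every x ≠ 0 in ℝⁿ, every λ with 0 < λ < |x|, every z with |z−x| > λ, and all reals 0 < a ≤ b, one has f(|z|, a) > (λ/|z−x|)^{p+2n} · f(|z^{x,λ}|, (λ/|z−x|)^p b). -/
noncomputable section

/-- Inversion of `ξ` about the sphere of radius `l` centered at `x`. -/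
def inversion {n : ℕ} (x : EuclideanSpace ℝ (Fin n)) (l : ℝ)
    (ξ : EuclideanSpace ℝ (Fin n)) : EuclideanSpace ℝ (Fin n) :=
  x + (l ^ 2 / ‖ξ - x‖ ^ 2) • (ξ - x)

theorem stmt_2 {n : ℕ} (hn : 2 ≤ n) (p q : ℝ) (hp : 0 < p) (hq : 0 < q)
    (hq' : q < (p + 2 * (n : ℝ)) / p)
    (f : ℝ → ℝ → ℝ)
    (hf : ∀ α : ℝ, 0 ≤ α → ∀ β : ℝ, 0 < β →
      f α β = (1 + α ^ 2) ^ ((p * q - p - 2 * (n : ℝ)) / 2) * β ^ (-q)) :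
    ∀ x : EuclideanSpace ℝ (Fin n), x ≠ 0 → ∀ l : ℝ, 0 < l → l < ‖x‖ →
      ∀ z : EuclideanSpace ℝ (Fin n), l < ‖z - x‖ → ∀ a b : ℝ, 0 < a → a ≤ b →
      f ‖z‖ a >
        (l / ‖z - x‖) ^ (p + 2 * (n : ℝ)) *
          f ‖inversion x l z‖ ((l / ‖z - x‖) ^ p * b) := by
  have hpq : p * q < p + 2 * (n : ℝ) := by
    rw [mul_comm]; exact (lt_div_iff₀ hp).mp hq'
  intro x hx l hl hlx z hz a b ha hab
  have hb : 0 < b := lt_of_lt_of_le ha hab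
  have hr0 : (0 : ℝ) < ‖z - x‖ := lt_trans hl hz
  set r : ℝ := ‖z - x‖ with hrdef
  set w : EuclideanSpace ℝ (Fin n) := inversion x l z with hwdef
  set c : ℝ := inner ℝ x (z - x) with hcdef
  set t : ℝ := l / r with htdef
  have ht0 : 0 < t := div_pos hl hr0
  set E : ℝ := (p * q - p - 2 * (n : ℝ)) / 2 with hEdef
  have hE : E < 0 := by rw [hEdef]; linarith
  -- expansion of ‖z‖²
  have hzsq : ‖z‖ ^ 2 = ‖x‖ ^ 2 + 2 * c + r ^ 2 := by
    have h := norm_add_sq_real x (z - x)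
    simpa [add_sub_cancel] using h
  -- expansion of ‖w‖²
  have hwx : w = x + (l ^ 2 / r ^ 2) • (z - x) := by
    rw [hwdef, hrdef]; rfl
  have hwsq : ‖w‖ ^ 2 =
      ‖x‖ ^ 2 + 2 * ((l ^ 2 / r ^ 2) * c) + (l ^ 2 / r ^ 2) ^ 2 * r ^ 2 := by
    rw [hwx]
    rw [norm_add_sq_real x ((l ^ 2 / r ^ 2) • (z - x)), real_inner_smul_right,
      norm_smul, Real.norm_eq_abs, abs_of_nonneg (by positivity : (0:ℝ) ≤ l ^ 2 / r ^ 2)]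
    ring
  have hws : r ^ 2 * ‖w‖ ^ 2 = r ^ 2 * ‖x‖ ^ 2 + 2 * l ^ 2 * c + l ^ 4 := by
    rw [hwsq]; field_simp
  -- key geometric inequality
  have key : l ^ 2 * (1 + ‖z‖ ^ 2) < r ^ 2 * (1 + ‖w‖ ^ 2) := by
    have h1 : (0 : ℝ) < r ^ 2 - l ^ 2 :=
      sub_pos.mpr (pow_lt_pow_left₀ hz hl.le (by norm_num))
    have h2 : (0 : ℝ) < 1 + ‖x‖ ^ 2 - l ^ 2 := by
      have := pow_lt_pow_left₀ hlx hl.le (n := 2) (by norm_num)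
      linarith
    have hdiff : r ^ 2 * (1 + ‖w‖ ^ 2) - l ^ 2 * (1 + ‖z‖ ^ 2)
        = (r ^ 2 - l ^ 2) * (1 + ‖x‖ ^ 2 - l ^ 2) := by
      linear_combination hws - l ^ 2 * hzsq
    linarith [mul_pos h1 h2]
  set A : ℝ := 1 + ‖z‖ ^ 2 with hAdef
  set B : ℝ := 1 + ‖w‖ ^ 2 with hBdef
  have hA : 0 < A := by positivity
  have hB : 0 < B := by positivity
  have htp : 0 < t ^ p := Real.rpow_pos_of_pos ht0 p
  -- rewrite using hf
  rw [hf ‖z‖ (norm_nonneg z) a ha,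
    hf ‖w‖ (norm_nonneg w) (t ^ p * b) (mul_pos htp hb)]
  have hsplit : (B ^ E * t ^ (p + 2 * (n : ℝ) - p * q)) * b ^ (-q)
      = t ^ (p + 2 * (n : ℝ)) * (B ^ E * (t ^ p * b) ^ (-q)) := by
    rw [show p + 2 * (n : ℝ) - p * q = (p + 2 * (n : ℝ)) + p * (-q) by ring,
      Real.rpow_add ht0, Real.rpow_mul ht0.le,
      Real.mul_rpow htp.le hb.le]
    ring
  rw [← hsplit]
  -- main comparison
  have ht2 : (0 : ℝ) < t ^ 2 := by positivity
  have hAB : A * t ^ 2 < B := by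
    have htt : t ^ 2 = l ^ 2 / r ^ 2 := by rw [htdef]; ring
    rw [htt]
    rw [show A * (l ^ 2 / r ^ 2) = l ^ 2 * A / r ^ 2 by ring,
      div_lt_iff₀ (by positivity : (0:ℝ) < r ^ 2)]
    nlinarith [key]
  have hAB' : A < B * (t ^ 2)⁻¹ := by
    rw [← div_eq_mul_inv, lt_div_iff₀ ht2]; exact hAB
  have htinv : t ^ (-(2 : ℝ)) = (t ^ 2)⁻¹ := by
    rw [show (-(2:ℝ)) = -((2:ℕ):ℝ) by norm_num, Real.rpow_neg ht0.le,
      Real.rpow_natCast]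
  have hts : t ^ (p + 2 * (n : ℝ) - p * q) = (t ^ (-(2 : ℝ))) ^ E := by
    rw [← Real.rpow_mul ht0.le]
    congr 1
    rw [hEdef]; ring
  have hmain : B ^ E * t ^ (p + 2 * (n : ℝ) - p * q) < A ^ E := by
    rw [hts, htinv, ← Real.mul_rpow hB.le (by positivity)]
    exact Real.rpow_lt_rpow_of_neg hA hAB' hE
  have hApow : 0 < A ^ E := Real.rpow_pos_of_pos hA E
  have hbq : 0 < b ^ (-q) := Real.rpow_pos_of_pos hb _
  have haq : b ^ (-q) ≤ a ^ (-q) :=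
    Real.rpow_le_rpow_of_nonpos ha hab (by linarith)
  linarith [mul_lt_mul_of_pos_right hmain hbq,
    mul_le_mul_of_nonneg_left haq hApow.le]
end
end

section
/- Let n ≥ 2 be an integer and p > 0. Let f : [0,∞) × (0,∞) → (0,∞) be continuous and let u be a positive C¹ solution of the integral equation (IE). Then for every fixed x ∈ ℝⁿ ∖ {0} there exists λ₀ ∈ (0, |x|) such that for every λ ∈ (0, λ₀) and every y ∈ ℝⁿ ∖ {0} with |y−x| ≥ λ, one has u_{x,λ}(y) ≥ u(y). -/
open MeasureTheory

noncomputable section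

/-- Kelvin-type transform of `u` about the sphere of radius `l` centered at `x`. -/
def kelvin {n : ℕ} (p : ℝ) (u : EuclideanSpace ℝ (Fin n) → ℝ)
    (x : EuclideanSpace ℝ (Fin n)) (l : ℝ) (ξ : EuclideanSpace ℝ (Fin n)) : ℝ :=
  (‖ξ - x‖ / l) ^ p * u (inversion x l ξ)

set_option maxHeartbeats 1600000 in
theorem stmt_3 {n : ℕ} (hn : 2 ≤ n) (p : ℝ) (hp : 0 < p)
    (f : ℝ → ℝ → ℝ)
    (hf_cont : ContinuousOn (fun q : ℝ × ℝ => f q.1 q.2) (Set.Ici 0 ×ˢ Set.Ioi 0))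
    (hf_pos : ∀ α : ℝ, 0 ≤ α → ∀ β : ℝ, 0 < β → 0 < f α β)
    (u : EuclideanSpace ℝ (Fin n) → ℝ)
    (hu_pos : ∀ x : EuclideanSpace ℝ (Fin n), x ≠ 0 → 0 < u x)
    (hu_C1 : ContDiffOn ℝ 1 u {(0 : EuclideanSpace ℝ (Fin n))}ᶜ)
    (hIE : ∀ x : EuclideanSpace ℝ (Fin n), x ≠ 0 →
      u x = ∫ y : EuclideanSpace ℝ (Fin n), ‖x - y‖ ^ p * f ‖y‖ (u y))
    (x : EuclideanSpace ℝ (Fin n)) (hx : x ≠ 0) :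
    ∃ lam₀ : ℝ, lam₀ ∈ Set.Ioo 0 ‖x‖ ∧
      ∀ lam : ℝ, lam ∈ Set.Ioo 0 lam₀ →
        ∀ y : EuclideanSpace ℝ (Fin n), y ≠ 0 → lam ≤ ‖y - x‖ →
          kelvin p u x lam y ≥ u y := by
  classical
  haveI : Nontrivial (EuclideanSpace ℝ (Fin n)) := ⟨x, 0, hx⟩
  have hR : (0 : ℝ) < ‖x‖ := norm_pos_iff.mpr hx
  set R : ℝ := ‖x‖ with hRdef
  set h : (EuclideanSpace ℝ (Fin n)) → ℝ := fun z => f ‖z‖ (u z) with hh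
  have hopen : IsOpen ({(0 : (EuclideanSpace ℝ (Fin n)))}ᶜ) := isOpen_compl_singleton
  have hucont : ContinuousOn u ({(0 : (EuclideanSpace ℝ (Fin n)))}ᶜ) := hu_C1.continuousOn
  have hnull : (volume : Measure (EuclideanSpace ℝ (Fin n))) {(0 : (EuclideanSpace ℝ (Fin n)))} = 0 := measure_singleton 0
  have hae0 : ∀ᵐ z : (EuclideanSpace ℝ (Fin n)) ∂volume, z ≠ 0 := by
    simpa [MeasureTheory.ae_iff] using hnull
  -- continuity of h off the origin
  have hhcont : ContinuousOn h ({(0 : (EuclideanSpace ℝ (Fin n)))}ᶜ) := by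
    apply hf_cont.comp ((continuous_norm.continuousOn).prodMk hucont)
    intro z hz
    exact ⟨norm_nonneg z, hu_pos z hz⟩
  -- a.e. strong measurability of functions continuous off 0
  have hmeas : ∀ g : (EuclideanSpace ℝ (Fin n)) → ℝ, ContinuousOn g ({(0 : (EuclideanSpace ℝ (Fin n)))}ᶜ) →
      AEStronglyMeasurable g (volume : Measure (EuclideanSpace ℝ (Fin n))) := by
    intro g hg
    have h := hg.aestronglyMeasurable (μ := volume) hopen.measurableSet
    rwa [Measure.restrict_eq_self_of_ae_mem] at h
    simpa [MeasureTheory.ae_iff] using hnull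
  -- positivity of h off origin
  have hhpos : ∀ z : (EuclideanSpace ℝ (Fin n)), z ≠ 0 → 0 < h z := fun z hz =>
    hf_pos _ (norm_nonneg z) _ (hu_pos z hz)
  -- integrability from the IE
  have hint : ∀ y : (EuclideanSpace ℝ (Fin n)), y ≠ 0 → Integrable (fun z : (EuclideanSpace ℝ (Fin n)) => ‖y - z‖ ^ p * h z) := by
    intro y hy
    by_contra hni
    have h0 := hIE y hy
    rw [integral_undef hni] at h0
    exact (hu_pos y hy).ne' h0
  -- the weight function W
  set W : (EuclideanSpace ℝ (Fin n)) → ℝ := fun z => (1 + ‖z‖) ^ p * h z with hW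
  have hWcont : ContinuousOn W ({(0 : (EuclideanSpace ℝ (Fin n)))}ᶜ) := by
    apply ContinuousOn.mul _ hhcont
    exact ((continuous_const.add continuous_norm).rpow_const
      (fun z => Or.inr hp.le)).continuousOn
  have hWm : AEStronglyMeasurable W (volume : Measure (EuclideanSpace ℝ (Fin n))) := hmeas W hWcont
  have hWnonneg : ∀ z : (EuclideanSpace ℝ (Fin n)), z ≠ 0 → 0 ≤ W z := fun z hz =>
    mul_nonneg (Real.rpow_nonneg (by positivity) p) (hhpos z hz).le
  -- integrability of W
  have hc₂ : (0 : ℝ) < (1 + 2 * R) / R := div_pos (by linarith) hR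
  set c₂ : ℝ := (1 + 2 * R) / R with hc₂def
  have hWint : Integrable W (volume : Measure (EuclideanSpace ℝ (Fin n))) := by
    refine Integrable.mono'
      ((((hint x hx).norm.add (hint (-x) (neg_ne_zero.mpr hx)).norm).const_mul (c₂ ^ p)))
      hWm ?_
    filter_upwards [hae0] with z hz
    set a : ℝ := ‖x - z‖ with ha
    set b : ℝ := ‖-x - z‖ with hb
    have ha0 : 0 ≤ a := norm_nonneg _
    have hb0 : 0 ≤ b := norm_nonneg _
    have hsum : 2 * R ≤ a + b := by
      have : (x - z) - (-x - z) = (2 : ℝ) • x := by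
        ext i; simp [sub_eq_add_neg]; ring
      calc 2 * R = ‖(x - z) - (-x - z)‖ := by rw [this, norm_smul]; simp [hRdef]
        _ ≤ a + b := norm_sub_le _ _
    have hz_le : ‖z‖ ≤ R + a := by
      calc ‖z‖ = ‖x - (x - z)‖ := by congr 1; abel
        _ ≤ ‖x‖ + ‖x - z‖ := norm_sub_le _ _
    have hmax : 1 + ‖z‖ ≤ c₂ * max a b := by
      have h1 : R ≤ max a b := by
        rcases le_total a b with hab | hab
        · nlinarith [le_max_right a b]
        · nlinarith [le_max_left a b]
      have h2 : a ≤ max a b := le_max_left _ _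
      have hRmax : 0 < max a b := lt_of_lt_of_le hR h1
      rw [hc₂def, div_mul_eq_mul_div, le_div_iff₀ hR]
      nlinarith
    have hmaxp : (max a b) ^ p ≤ a ^ p + b ^ p := by
      rcases max_cases a b with ⟨hm, _⟩ | ⟨hm, _⟩ <;> rw [hm]
      · nlinarith [Real.rpow_nonneg hb0 p]
      · nlinarith [Real.rpow_nonneg ha0 p]
    have hWle : W z ≤ c₂ ^ p * (a ^ p * h z + b ^ p * h z) := by
      have h1 : (1 + ‖z‖) ^ p ≤ (c₂ * max a b) ^ p :=
        Real.rpow_le_rpow (by positivity) hmax hp.le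
      have h2 : (c₂ * max a b) ^ p = c₂ ^ p * (max a b) ^ p :=
        Real.mul_rpow hc₂.le (le_max_of_le_left ha0)
      have h3 : (1 + ‖z‖) ^ p ≤ c₂ ^ p * (a ^ p + b ^ p) := by
        rw [h2] at h1
        refine h1.trans ?_
        exact mul_le_mul_of_nonneg_left hmaxp (Real.rpow_nonneg hc₂.le p)
      have := mul_le_mul_of_nonneg_right h3 (hhpos z hz).le
      calc W z = (1 + ‖z‖) ^ p * h z := rfl
        _ ≤ c₂ ^ p * (a ^ p + b ^ p) * h z := this
        _ = c₂ ^ p * (a ^ p * h z + b ^ p * h z) := by ring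
    have hWn : ‖W z‖ = W z := Real.norm_of_nonneg (hWnonneg z hz)
    rw [hWn]
    refine hWle.trans ?_
    have e1 : a ^ p * h z = ‖a ^ p * h z‖ := by
      rw [Real.norm_of_nonneg (mul_nonneg (Real.rpow_nonneg ha0 p) (hhpos z hz).le)]
    have e2 : b ^ p * h z = ‖b ^ p * h z‖ := by
      rw [Real.norm_of_nonneg (mul_nonneg (Real.rpow_nonneg hb0 p) (hhpos z hz).le)]
    simp only [Pi.add_apply]
    rw [← e1, ← e2]
  -- the constant K and the growth bound
  set K : ℝ := ∫ z : (EuclideanSpace ℝ (Fin n)), W z with hK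
  have hK0 : 0 ≤ K :=
    integral_nonneg_of_ae (by filter_upwards [hae0] with z hz using hWnonneg z hz)
  have hgrow : ∀ y : (EuclideanSpace ℝ (Fin n)), y ≠ 0 → u y ≤ (max 1 ‖y‖) ^ p * K := by
    intro y hy
    have hmaxy : (0 : ℝ) < max 1 ‖y‖ := lt_of_lt_of_le one_pos (le_max_left _ _)
    rw [hIE y hy]
    have hbd : ∀ᵐ z : (EuclideanSpace ℝ (Fin n)) ∂volume,
        ‖y - z‖ ^ p * h z ≤ (max 1 ‖y‖) ^ p * W z := by
      filter_upwards [hae0] with z hz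
      have h1 : ‖y - z‖ ≤ max 1 ‖y‖ * (1 + ‖z‖) := by
        have : ‖y - z‖ ≤ ‖y‖ + ‖z‖ := norm_sub_le _ _
        have h2 : ‖y‖ ≤ max 1 ‖y‖ := le_max_right _ _
        have h3 : ‖z‖ ≤ max 1 ‖y‖ * ‖z‖ := by
          nlinarith [le_max_left (1:ℝ) ‖y‖, norm_nonneg z]
        nlinarith
      have h4 : ‖y - z‖ ^ p ≤ (max 1 ‖y‖ * (1 + ‖z‖)) ^ p :=
        Real.rpow_le_rpow (norm_nonneg _) h1 hp.le
      have h5 : (max 1 ‖y‖ * (1 + ‖z‖)) ^ p = (max 1 ‖y‖) ^ p * (1 + ‖z‖) ^ p :=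
        Real.mul_rpow hmaxy.le (by positivity)
      calc ‖y - z‖ ^ p * h z ≤ (max 1 ‖y‖ * (1 + ‖z‖)) ^ p * h z :=
            mul_le_mul_of_nonneg_right h4 (hhpos z hz).le
        _ = (max 1 ‖y‖) ^ p * W z := by rw [h5]; ring
    calc (∫ z : (EuclideanSpace ℝ (Fin n)), ‖y - z‖ ^ p * h z)
        ≤ ∫ z : (EuclideanSpace ℝ (Fin n)), (max 1 ‖y‖) ^ p * W z :=
          integral_mono_ae (hint y hy) (hWint.const_mul _) hbd
      _ = (max 1 ‖y‖) ^ p * K := by rw [integral_const_mul]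
  -- compactness: bounds on u and its derivative near x
  set sB : Set (EuclideanSpace ℝ (Fin n)) := Metric.closedBall x (R / 2) with hsB
  have hsB0 : ∀ z ∈ sB, z ≠ 0 := by
    intro z hz hz0
    rw [hz0] at hz
    have : dist (0 : (EuclideanSpace ℝ (Fin n))) x ≤ R / 2 := hz
    rw [dist_zero_left] at this
    linarith
  have hsBsub : sB ⊆ ({(0 : (EuclideanSpace ℝ (Fin n)))}ᶜ) := fun z hz => hsB0 z hz
  have hcomp : IsCompact sB := isCompact_closedBall x (R / 2)
  have hxmem : x ∈ sB := Metric.mem_closedBall_self (by linarith)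
  obtain ⟨zm, hzm, hzmin⟩ := hcomp.exists_isMinOn ⟨x, hxmem⟩ (hucont.mono hsBsub)
  set m : ℝ := u zm with hm
  have hm0 : 0 < m := hu_pos zm (hsB0 zm hzm)
  have hfdcont : ContinuousOn (fun z : (EuclideanSpace ℝ (Fin n)) => ‖fderiv ℝ u z‖) ({(0 : (EuclideanSpace ℝ (Fin n)))}ᶜ) :=
    (hu_C1.continuousOn_fderiv_of_isOpen hopen le_rfl).norm
  obtain ⟨zM, _, hzmax⟩ := hcomp.exists_isMaxOn ⟨x, hxmem⟩ (hfdcont.mono hsBsub)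
  set M : ℝ := ‖fderiv ℝ u zM‖ with hM
  have hM0 : 0 ≤ M := norm_nonneg _
  -- radius r₀
  set r₀ : ℝ := min (R / 2) (p * m / (2 * (M + 1))) with hr₀
  have hr₀pos : 0 < r₀ := lt_min (by linarith) (div_pos (mul_pos hp hm0) (by linarith))
  have hr₀le₁ : r₀ ≤ R / 2 := min_le_left _ _
  have hr₀le₂ : r₀ ≤ p * m / (2 * (M + 1)) := min_le_right _ _
  -- monotonicity of the rescaled function along rays
  have hanti : ∀ θ : (EuclideanSpace ℝ (Fin n)), ‖θ‖ = 1 →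
      AntitoneOn (fun t : ℝ => t ^ (-(p/2)) * u (x + t • θ)) (Set.Ioc (0:ℝ) r₀) := by
    intro θ hθ
    have hmem : ∀ t : ℝ, 0 < t → t ≤ r₀ → x + t • θ ∈ sB := by
      intro t ht htr
      rw [hsB, Metric.mem_closedBall, dist_eq_norm]
      have : x + t • θ - x = t • θ := by abel
      rw [this, norm_smul, hθ, Real.norm_of_nonneg ht.le, mul_one]
      linarith
    have hne : ∀ t : ℝ, 0 < t → t ≤ r₀ → x + t • θ ≠ 0 :=
      fun t ht htr => hsB0 _ (hmem t ht htr)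
    have hder : ∀ t : ℝ, 0 < t → t ≤ r₀ →
        HasDerivAt (fun t : ℝ => t ^ (-(p/2)) * u (x + t • θ))
          (t ^ (-(p/2) - 1) *
            (-(p/2) * u (x + t • θ) + t * (fderiv ℝ u (x + t • θ) θ))) t := by
      intro t ht htr
      have h1 : HasDerivAt (fun t : ℝ => t ^ (-(p/2))) (-(p/2) * t ^ (-(p/2) - 1)) t :=
        Real.hasDerivAt_rpow_const (Or.inl ht.ne')
      have hc : HasDerivAt (fun t : ℝ => x + t • θ) θ t := by
        simpa using ((hasDerivAt_id t).smul_const θ).const_add x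
      have hdu : DifferentiableAt ℝ u (x + t • θ) :=
        (hu_C1.contDiffAt (hopen.mem_nhds (hne t ht htr))).differentiableAt one_ne_zero
      have h2 : HasDerivAt (fun t : ℝ => u (x + t • θ)) (fderiv ℝ u (x + t • θ) θ) t :=
        hdu.hasFDerivAt.comp_hasDerivAt t hc
      have hmul := h1.mul h2
      have hre : t ^ (-(p/2)) = t ^ (-(p/2) - 1) * t := by
        rw [← Real.rpow_add_one ht.ne']; ring_nf
      refine hmul.congr_deriv ?_
      rw [hre]; ring
    apply antitoneOn_of_deriv_nonpos (convex_Ioc _ _)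
    · intro t ht
      exact (hder t ht.1 ht.2).continuousAt.continuousWithinAt
    · intro t ht
      rw [interior_Ioc] at ht
      exact (hder t ht.1 ht.2.le).differentiableAt.differentiableWithinAt
    · intro t ht
      rw [interior_Ioc] at ht
      obtain ⟨ht0, htr⟩ := ht
      rw [(hder t ht0 htr.le).deriv]
      have hum : m ≤ u (x + t • θ) := hzmin (hmem t ht0 htr.le)
      have hfd : fderiv ℝ u (x + t • θ) θ ≤ M := by
        calc fderiv ℝ u (x + t • θ) θ ≤ ‖fderiv ℝ u (x + t • θ) θ‖ := le_abs_self _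
          _ ≤ ‖fderiv ℝ u (x + t • θ)‖ * ‖θ‖ := ContinuousLinearMap.le_opNorm _ _
          _ = ‖fderiv ℝ u (x + t • θ)‖ := by rw [hθ, mul_one]
          _ ≤ M := hzmax (hmem t ht0 htr.le)
      apply mul_nonpos_of_nonneg_of_nonpos (Real.rpow_nonneg ht0.le _)
      have h6 : t * (fderiv ℝ u (x + t • θ) θ) ≤ t * M :=
        mul_le_mul_of_nonneg_left hfd ht0.le
      have h7 : t * M ≤ p * m / 2 := by
        have h8 : t ≤ p * m / (2 * (M + 1)) := le_trans htr.le hr₀le₂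
        have h9 : t * M ≤ (p * m / (2 * (M + 1))) * M :=
          mul_le_mul_of_nonneg_right h8 hM0
        calc t * M ≤ (p * m / (2 * (M + 1))) * M := h9
          _ ≤ p * m / 2 := by
            rw [div_mul_eq_mul_div, div_le_div_iff₀ (by positivity) (by norm_num)]
            nlinarith
      nlinarith
  -- final constants
  set K' : ℝ := max K 1 with hK'
  have hK'0 : 0 < K' := lt_of_lt_of_le one_pos (le_max_right _ _)
  set c₁ : ℝ := (1 + R) / r₀ + 1 with hc₁
  have hc₁0 : 0 < c₁ := add_pos (div_pos (by linarith) hr₀pos) one_pos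
  set D : ℝ := (m / (c₁ ^ p * K')) ^ (p⁻¹) with hD
  have hD0 : 0 < D := Real.rpow_pos_of_pos (div_pos hm0 (mul_pos (Real.rpow_pos_of_pos hc₁0 p) hK'0)) _
  refine ⟨min r₀ D, ⟨lt_min hr₀pos hD0, ?_⟩, ?_⟩
  · calc min r₀ D ≤ r₀ := min_le_left _ _
      _ ≤ R / 2 := hr₀le₁
      _ < R := by linarith
  intro lam hlam y hy hly
  obtain ⟨hlam0, hlamlt⟩ := hlam
  have hlamr₀ : lam ≤ r₀ := le_of_lt (lt_of_lt_of_le hlamlt (min_le_left _ _))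
  have hlamD : lam ≤ D := le_of_lt (lt_of_lt_of_le hlamlt (min_le_right _ _))
  set r : ℝ := ‖y - x‖ with hr
  have hr0 : 0 < r := lt_of_lt_of_le hlam0 hly
  set θ : (EuclideanSpace ℝ (Fin n)) := r⁻¹ • (y - x) with hθdef
  have hθ : ‖θ‖ = 1 := by
    rw [hθdef, norm_smul, Real.norm_of_nonneg (inv_nonneg.mpr hr0.le)]
    field_simp
    exact hr.symm
  have hyx : y = x + r • θ := by
    rw [hθdef, smul_smul, mul_inv_cancel₀ hr0.ne', one_smul]
    abel
  set s : ℝ := lam ^ 2 / r with hs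
  have hs0 : 0 < s := div_pos (pow_pos hlam0 2) hr0
  have hslam : s ≤ lam := by
    rw [hs, div_le_iff₀ hr0]
    nlinarith
  have hsr : s ≤ r := le_trans hslam hly
  have hinv : inversion x lam y = x + s • θ := by
    rw [inversion, hθdef, smul_smul]
    congr 2
    rw [hs]
    field_simp [← hr]
    ring
    rw [← hr]
    field_simp
  have hkel : kelvin p u x lam y = (r / lam) ^ p * u (x + s • θ) := by
    rw [kelvin, hinv, ← hr]
  rw [ge_iff_le, hkel]
  have hsmem : x + s • θ ∈ sB := by
    rw [hsB, Metric.mem_closedBall, dist_eq_norm]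
    have e : x + s • θ - x = s • θ := by abel
    rw [e, norm_smul, hθ, Real.norm_of_nonneg hs0.le, mul_one]
    linarith [hslam.trans hlamr₀]
  have hus : m ≤ u (x + s • θ) := hzmin hsmem
  rcases le_total r r₀ with hcase | hcase
  · -- near region: use monotonicity
    have hmono := hanti θ hθ (Set.mem_Ioc.mpr ⟨hs0, hsr.trans hcase⟩)
      (Set.mem_Ioc.mpr ⟨hr0, hcase⟩) hsr
    -- hmono : r ^ (-(p/2)) * u (x + r • θ) ≤ s ^ (-(p/2)) * u (x + s • θ)
    have hpow : (r / lam) ^ p = r ^ (p/2) * s ^ (-(p/2)) := by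
      have hrl : (0:ℝ) < r / lam := div_pos hr0 hlam0
      have e1 : (r / lam) ^ p = ((r / lam) ^ (2:ℝ)) ^ (p/2) := by
        rw [← Real.rpow_mul hrl.le]
        congr 1
        ring
      have e2 : (r / lam) ^ (2:ℝ) = r / s := by
        rw [show (2:ℝ) = ((2:ℕ):ℝ) by norm_num, Real.rpow_natCast]
        rw [hs]
        field_simp
      rw [e1, e2, Real.div_rpow hr0.le hs0.le, Real.rpow_neg hs0.le, div_eq_mul_inv]
    rw [hpow, hyx]
    have := mul_le_mul_of_nonneg_left hmono (Real.rpow_nonneg hr0.le (p/2))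
    calc u (x + r • θ) = r ^ (p/2) * (r ^ (-(p/2)) * u (x + r • θ)) := by
          rw [← mul_assoc, ← Real.rpow_add hr0]
          norm_num
      _ ≤ r ^ (p/2) * (s ^ (-(p/2)) * u (x + s • θ)) := this
      _ = r ^ (p/2) * s ^ (-(p/2)) * u (x + s • θ) := by ring
  · -- far region: use the growth bound
    have hgy := hgrow y hy
    have hmax_le : max 1 ‖y‖ ≤ c₁ * r := by
      have h1 : ‖y‖ ≤ R + r := by
        calc ‖y‖ = ‖x + (y - x)‖ := by congr 1; abel
          _ ≤ ‖x‖ + ‖y - x‖ := norm_add_le _ _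
      have h2 : max 1 ‖y‖ ≤ 1 + ‖y‖ := by
        rcases le_total (1:ℝ) ‖y‖ with hc | hc
        · rw [max_eq_right hc]; linarith [norm_nonneg y]
        · rw [max_eq_left hc]; linarith [norm_nonneg y]
      have h3 : 1 + R ≤ (1 + R) / r₀ * r := by
        rw [div_mul_eq_mul_div, le_div_iff₀ hr₀pos]
        nlinarith
      rw [hc₁]
      nlinarith
    have huy : u y ≤ (c₁ * r) ^ p * K' := by
      refine hgy.trans ?_
      have h4 : (max 1 ‖y‖) ^ p ≤ (c₁ * r) ^ p :=
        Real.rpow_le_rpow (le_trans zero_le_one (le_max_left _ _)) hmax_le hp.le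
      have h5 : K ≤ K' := le_max_left _ _
      have h6 : (0:ℝ) ≤ (c₁ * r) ^ p := Real.rpow_nonneg (mul_pos hc₁0 hr0).le _
      nlinarith [Real.rpow_nonneg (le_trans zero_le_one (le_max_left (1:ℝ) ‖y‖)) p]
    have hlamp : lam ^ p ≤ m / (c₁ ^ p * K') := by
      have := Real.rpow_le_rpow hlam0.le hlamD hp.le
      rwa [hD, Real.rpow_inv_rpow (div_pos hm0 (mul_pos (Real.rpow_pos_of_pos hc₁0 p) hK'0)).le hp.ne'] at this
    have hkey : (c₁ * r) ^ p * K' ≤ (r / lam) ^ p * m := by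
      have e1 : (c₁ * r) ^ p = c₁ ^ p * r ^ p := Real.mul_rpow hc₁0.le hr0.le
      have e2 : (r / lam) ^ p = r ^ p / lam ^ p := Real.div_rpow hr0.le hlam0.le p
      rw [e1, e2]
      rw [div_mul_eq_mul_div, le_div_iff₀ (Real.rpow_pos_of_pos hlam0 p)]
      have h7 : lam ^ p * (c₁ ^ p * K') ≤ m := by
        rwa [le_div_iff₀ (mul_pos (Real.rpow_pos_of_pos hc₁0 p) hK'0)] at hlamp
      calc c₁ ^ p * r ^ p * K' * lam ^ p
          = r ^ p * (lam ^ p * (c₁ ^ p * K')) := by ring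
        _ ≤ r ^ p * m := mul_le_mul_of_nonneg_left h7 (Real.rpow_nonneg hr0.le _)
    calc u y ≤ (c₁ * r) ^ p * K' := huy
      _ ≤ (r / lam) ^ p * m := hkey
      _ ≤ (r / lam) ^ p * u (x + s • θ) :=
          mul_le_mul_of_nonneg_left hus (Real.rpow_nonneg (div_pos hr0 hlam0).le _)
end
end

section
/- Let n ≥ 2 be an integer and p > 0. Let f : [0,∞) × (0,∞) → (0,∞) be continuous and let u be a positive C¹ solution of the integral equation (IE). Then for every x ∈ ℝⁿ, every λ > 0, and every ξ ∈ ℝⁿ with ξ ≠ x and ξ^{x,λ} ≠ 0, one has u_{x,λ}(ξ) = ∫_{ℝⁿ} λ^{p+2n} |ξ−z|^p |z−x|^{−(p+2n)} f(|z^{x,λ}|, u(z^{x,λ})) dz. -/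
open MeasureTheory

noncomputable section

lemma inversion_eq {n : ℕ} (x : EuclideanSpace ℝ (Fin n)) (l : ℝ)
    (ξ : EuclideanSpace ℝ (Fin n)) :
    inversion x l ξ = EuclideanGeometry.inversion x l ξ := by
  simp only [inversion, EuclideanGeometry.inversion_def, dist_eq_norm, div_pow,
    vsub_eq_sub, vadd_eq_add]
  abel

lemma key_scalar {lam a b r p : ℝ} (hlam : 0 < lam) (ha : 0 < a) (hb : 0 < b)
    (hr : 0 ≤ r) (n : ℕ) :
    (a / lam) ^ p * ((lam ^ 2 / b ^ 2) ^ n * ((lam ^ 2 / (a * b) * r) ^ p)) =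
      lam ^ (p + 2 * (n : ℝ)) * r ^ p * b ^ (-(p + 2 * (n : ℝ))) := by
  have h1 : (a / lam) ^ p * (lam ^ 2 / (a * b) * r) ^ p = (lam / b * r) ^ p := by
    rw [← Real.mul_rpow (by positivity) (by positivity)]
    congr 1
    field_simp
  have h2 : lam ^ (p + 2 * (n : ℝ)) = lam ^ p * lam ^ (2 * n) := by
    rw [show (2 : ℝ) * n = ((2 * n : ℕ) : ℝ) by push_cast; ring,
      Real.rpow_add hlam, Real.rpow_natCast]
  have h3 : b ^ (-(p + 2 * (n : ℝ))) = (b ^ p * b ^ (2 * n))⁻¹ := by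
    rw [Real.rpow_neg hb.le, show (2 : ℝ) * n = ((2 * n : ℕ) : ℝ) by push_cast; ring,
      Real.rpow_add hb, Real.rpow_natCast]
  calc (a / lam) ^ p * ((lam ^ 2 / b ^ 2) ^ n * ((lam ^ 2 / (a * b) * r) ^ p))
      = ((a / lam) ^ p * (lam ^ 2 / (a * b) * r) ^ p) * (lam ^ 2 / b ^ 2) ^ n := by ring
    _ = (lam / b * r) ^ p * (lam ^ (2 * n) / b ^ (2 * n)) := by
        rw [h1, div_pow, ← pow_mul, ← pow_mul]
    _ = lam ^ p * r ^ p * (b ^ p)⁻¹ * (lam ^ (2 * n) / b ^ (2 * n)) := by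
        rw [Real.mul_rpow (by positivity) hr, Real.div_rpow hlam.le hb.le]
        field_simp
    _ = _ := by
        rw [h2, h3]
        have hbp : (0:ℝ) < b ^ p := Real.rpow_pos_of_pos hb p
        field_simp

lemma abs_det_deriv {n : ℕ} (lam : ℝ) (hlam : 0 < lam) (x z : EuclideanSpace ℝ (Fin n))
    (hz : z ≠ x) :
    |(((lam / dist z x) ^ 2 • (Submodule.reflection (ℝ ∙ (z - x))ᗮ :
        EuclideanSpace ℝ (Fin n) →L[ℝ] EuclideanSpace ℝ (Fin n))).det)| =
      (lam ^ 2 / ‖z - x‖ ^ 2) ^ n := by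
  set L : EuclideanSpace ℝ (Fin n) →L[ℝ] EuclideanSpace ℝ (Fin n) :=
    (Submodule.reflection (ℝ ∙ (z - x))ᗮ : EuclideanSpace ℝ (Fin n) →L[ℝ] EuclideanSpace ℝ (Fin n)) with hL
  have hrefl : |L.det| = 1 := by
    have hcomp : (L : EuclideanSpace ℝ (Fin n) →ₗ[ℝ] EuclideanSpace ℝ (Fin n)) ∘ₗ
        (L : EuclideanSpace ℝ (Fin n) →ₗ[ℝ] EuclideanSpace ℝ (Fin n)) = LinearMap.id := by
      ext v
      simp [hL, Submodule.reflection_reflection]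
    have h := congrArg LinearMap.det hcomp
    rw [LinearMap.det_comp, LinearMap.det_id] at h
    rcases mul_self_eq_one_iff.mp h with h' | h' <;> simp [ContinuousLinearMap.det, h']
  have hdet : ((lam / dist z x) ^ 2 • L).det =
      ((lam / dist z x) ^ 2) ^ Module.finrank ℝ (EuclideanSpace ℝ (Fin n)) * L.det := by
    rw [ContinuousLinearMap.det, ContinuousLinearMap.coe_smul, LinearMap.det_smul]
  rw [hdet, abs_mul, abs_pow, hrefl, mul_one]
  have hzx : (0:ℝ) < ‖z - x‖ := by
    rw [norm_pos_iff, sub_ne_zero]; exact hz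
  rw [dist_eq_norm z x, finrank_euclideanSpace_fin, abs_of_nonneg (by positivity), div_pow]

theorem stmt_5 {n : ℕ} (hn : 2 ≤ n) (p : ℝ) (hp : 0 < p)
    (f : ℝ → ℝ → ℝ)
    (hf_cont : ContinuousOn (fun q : ℝ × ℝ => f q.1 q.2) (Set.Ici 0 ×ˢ Set.Ioi 0))
    (hf_pos : ∀ α : ℝ, 0 ≤ α → ∀ β : ℝ, 0 < β → 0 < f α β)
    (u : EuclideanSpace ℝ (Fin n) → ℝ)
    (hu_pos : ∀ x : EuclideanSpace ℝ (Fin n), x ≠ 0 → 0 < u x)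
    (hu_C1 : ContDiffOn ℝ 1 u {(0 : EuclideanSpace ℝ (Fin n))}ᶜ)
    (hIE : ∀ x : EuclideanSpace ℝ (Fin n), x ≠ 0 →
      u x = ∫ y : EuclideanSpace ℝ (Fin n), ‖x - y‖ ^ p * f ‖y‖ (u y)) :
    ∀ x : EuclideanSpace ℝ (Fin n), ∀ lam : ℝ, 0 < lam →
      ∀ ξ : EuclideanSpace ℝ (Fin n), ξ ≠ x → inversion x lam ξ ≠ 0 →
        kelvin p u x lam ξ =
          ∫ z : EuclideanSpace ℝ (Fin n),
            lam ^ (p + 2 * (n : ℝ)) * ‖ξ - z‖ ^ p * ‖z - x‖ ^ (-(p + 2 * (n : ℝ))) *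
              f ‖inversion x lam z‖ (u (inversion x lam z)) := by
  intro x lam hlam ξ hξx hξ0
  have hlamne : lam ≠ 0 := hlam.ne'
  set φ : EuclideanSpace ℝ (Fin n) → EuclideanSpace ℝ (Fin n) :=
    EuclideanGeometry.inversion x lam with hφ
  rw [inversion_eq] at hξ0
  set s : Set (EuclideanSpace ℝ (Fin n)) := {x}ᶜ with hs
  have hsm : MeasurableSet s := (measurableSet_singleton x).compl
  haveI : Nonempty (Fin n) := ⟨⟨0, by omega⟩⟩
  have hres : (volume : Measure (EuclideanSpace ℝ (Fin n))).restrict s = volume := by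
    rw [Measure.restrict_congr_set (t := Set.univ), Measure.restrict_univ]
    rw [ae_eq_univ, hs, compl_compl]
    exact measure_singleton x
  -- derivative data
  set f' : EuclideanSpace ℝ (Fin n) →
      (EuclideanSpace ℝ (Fin n) →L[ℝ] EuclideanSpace ℝ (Fin n)) :=
    fun z => (lam / dist z x) ^ 2 • (Submodule.reflection (ℝ ∙ (z - x))ᗮ :
      EuclideanSpace ℝ (Fin n) →L[ℝ] EuclideanSpace ℝ (Fin n)) with hf'
  have hderiv : ∀ z ∈ s, HasFDerivWithinAt φ (f' z) s z := by
    intro z hz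
    exact (EuclideanGeometry.hasFDerivAt_inversion hz).hasFDerivWithinAt
  have hinj : Set.InjOn φ s := (EuclideanGeometry.inversion_injective x hlamne).injOn
  have himg : φ '' s = s := by
    apply Set.Subset.antisymm
    · rintro y ⟨z, hz, rfl⟩
      simp only [hs, Set.mem_compl_iff, Set.mem_singleton_iff] at hz ⊢
      rw [hφ, EuclideanGeometry.inversion_eq_center hlamne]
      exact hz
    · intro y hy
      simp only [hs, Set.mem_compl_iff, Set.mem_singleton_iff] at hy
      refine ⟨φ y, ?_, ?_⟩
      · simp only [hs, Set.mem_compl_iff, Set.mem_singleton_iff]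
        rw [hφ, EuclideanGeometry.inversion_eq_center hlamne]
        exact hy
      · rw [hφ, EuclideanGeometry.inversion_inversion x hlamne]
  have hcov := integral_image_eq_integral_abs_det_fderiv_smul volume hsm hderiv hinj
    (fun y => ‖φ ξ - y‖ ^ p * f ‖y‖ (u y))
  rw [himg] at hcov
  -- main computation
  rw [kelvin, inversion_eq, hIE _ hξ0]
  simp only [inversion_eq]
  rw [show (∫ y, ‖EuclideanGeometry.inversion x lam ξ - y‖ ^ p * f ‖y‖ (u y)) =
      ∫ y in s, ‖φ ξ - y‖ ^ p * f ‖y‖ (u y) by rw [hres, hφ]]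
  rw [hcov]
  rw [show (∫ z, lam ^ (p + 2 * (n:ℝ)) * ‖ξ - z‖ ^ p * ‖z - x‖ ^ (-(p + 2 * (n:ℝ))) *
        f ‖EuclideanGeometry.inversion x lam z‖ (u (EuclideanGeometry.inversion x lam z))) =
      ∫ z in s, lam ^ (p + 2 * (n:ℝ)) * ‖ξ - z‖ ^ p * ‖z - x‖ ^ (-(p + 2 * (n:ℝ))) *
        f ‖φ z‖ (u (φ z)) by rw [hres, hφ]]
  rw [← integral_const_mul]
  apply setIntegral_congr_fun hsm
  intro z hz
  simp only [hs, Set.mem_compl_iff, Set.mem_singleton_iff] at hz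
  have hξxn : (0:ℝ) < ‖ξ - x‖ := by rw [norm_pos_iff, sub_ne_zero]; exact hξx
  have hzxn : (0:ℝ) < ‖z - x‖ := by rw [norm_pos_iff, sub_ne_zero]; exact hz
  have hdd : ‖φ ξ - φ z‖ = lam ^ 2 / (‖ξ - x‖ * ‖z - x‖) * ‖ξ - z‖ := by
    rw [← dist_eq_norm, hφ, EuclideanGeometry.dist_inversion_inversion hξx hz lam,
      dist_eq_norm, dist_eq_norm, dist_eq_norm]
  dsimp only
  rw [smul_eq_mul, hf']
  rw [abs_det_deriv lam hlam x z hz, hdd]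
  have hk := key_scalar (p := p) hlam hξxn hzxn (norm_nonneg (ξ - z)) n
  calc (‖ξ - x‖ / lam) ^ p * ((lam ^ 2 / ‖z - x‖ ^ 2) ^ n *
        ((lam ^ 2 / (‖ξ - x‖ * ‖z - x‖) * ‖ξ - z‖) ^ p * f ‖φ z‖ (u (φ z))))
      = ((‖ξ - x‖ / lam) ^ p * ((lam ^ 2 / ‖z - x‖ ^ 2) ^ n *
        ((lam ^ 2 / (‖ξ - x‖ * ‖z - x‖) * ‖ξ - z‖) ^ p))) * f ‖φ z‖ (u (φ z)) := by ring
    _ = lam ^ (p + 2 * (n:ℝ)) * ‖ξ - z‖ ^ p * ‖z - x‖ ^ (-(p + 2 * (n:ℝ))) *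
        f ‖φ z‖ (u (φ z)) := by rw [hk]
end
end

section
/- Let n ≥ 2 be an integer and p > 0. For every x ∈ ℝⁿ, every λ > 0, and all ξ, z ∈ ℝⁿ with |ξ−x| > λ and |z−x| > λ, the kernel K is strictly positive: K(x,λ;ξ,z) = (|z−x|/λ)^p |ξ − z^{x,λ}|^p − |ξ−z|^p > 0. -/
noncomputable section

/-- The kernel `K(x, l; ξ, z)` in the moving-spheres computation. -/
def kernelK {n : ℕ} (p : ℝ) (x : EuclideanSpace ℝ (Fin n)) (l : ℝ)
    (ξ z : EuclideanSpace ℝ (Fin n)) : ℝ :=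
  (‖z - x‖ / l) ^ p * ‖ξ - inversion x l z‖ ^ p - ‖ξ - z‖ ^ p

theorem stmt_7 {n : ℕ} (hn : 2 ≤ n) (p : ℝ) (hp : 0 < p)
    (x : EuclideanSpace ℝ (Fin n)) (lam : ℝ) (hlam : 0 < lam)
    (ξ z : EuclideanSpace ℝ (Fin n)) (hξ : lam < ‖ξ - x‖) (hz : lam < ‖z - x‖) :
    0 < kernelK p x lam ξ z := by
  set a := ξ - x with ha
  set b := z - x with hb
  have hs : lam < ‖a‖ := hξ
  have hr : lam < ‖b‖ := hz
  have hr0 : (0:ℝ) < ‖b‖ := hlam.trans hr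
  set c : ℝ := lam ^ 2 / ‖b‖ ^ 2 with hc
  have hinv : ξ - inversion x lam z = a - c • b := by
    simp only [inversion, ← hb, ← hc]
    rw [ha]
    abel
  have hsub : ξ - z = a - b := by rw [ha, hb]; abel
  -- squared norms
  have h1 : ‖a - c • b‖ ^ 2 = ‖a‖ ^ 2 - 2 * (c * inner ℝ a b) + c ^ 2 * ‖b‖ ^ 2 := by
    rw [@norm_sub_sq_real, real_inner_smul_right, norm_smul]
    simp [Real.norm_eq_abs, mul_pow, sq_abs]
  have h2 : ‖a - b‖ ^ 2 = ‖a‖ ^ 2 - 2 * inner ℝ a b + ‖b‖ ^ 2 := by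
    rw [@norm_sub_sq_real]
  -- key strict inequality on the squares
  have hkey : (‖b‖ / lam * ‖a - c • b‖) ^ 2 > ‖a - b‖ ^ 2 := by
    have heq : (‖b‖ / lam * ‖a - c • b‖) ^ 2 - ‖a - b‖ ^ 2
        = (‖a‖ ^ 2 - lam ^ 2) * (‖b‖ ^ 2 - lam ^ 2) / lam ^ 2 := by
      rw [mul_pow, div_pow, h1, h2, hc]
      field_simp
      ring
    have hA : (0:ℝ) < ‖a‖ ^ 2 - lam ^ 2 := by nlinarith
    have hB : (0:ℝ) < ‖b‖ ^ 2 - lam ^ 2 := by nlinarith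
    have := div_pos (mul_pos hA hB) (pow_pos hlam 2)
    linarith
  have hpos : ‖a - b‖ < ‖b‖ / lam * ‖a - c • b‖ := by
    have h0 : 0 ≤ ‖b‖ / lam * ‖a - c • b‖ :=
      mul_nonneg (div_nonneg hr0.le hlam.le) (norm_nonneg _)
    exact lt_of_pow_lt_pow_left₀ 2 h0 hkey
  have hrpow : ‖a - b‖ ^ p < (‖b‖ / lam * ‖a - c • b‖) ^ p :=
    Real.rpow_lt_rpow (norm_nonneg _) hpos hp
  have hmul : (‖b‖ / lam * ‖a - c • b‖) ^ p = (‖b‖ / lam) ^ p * ‖a - c • b‖ ^ p :=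
    Real.mul_rpow (div_nonneg hr0.le hlam.le) (norm_nonneg _)
  rw [kernelK, hinv, hsub, ← hmul]
  linarith
end
end

section
/- Let n ≥ 2 be an integer and p > 0. Let f : [0,∞) × (0,∞) → (0,∞) be continuous and let u : ℝⁿ ∖ {0} → ℝ be a positive continuous solution of the integral equation (IE). Then ∫_{ℝⁿ} (1 + |z|^p) f(|z|, u(z)) dz < ∞. -/
open MeasureTheory

noncomputable section

lemma aux_rpow_bound (p a b t : ℝ) (hp : 0 < p) (ha : 0 ≤ a) (hb : 0 ≤ b) (ht : 0 ≤ t)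
    (h2 : 2 ≤ a + b) (h2t : 2 * t ≤ a + b) : 1 + t ^ p ≤ 2 * (a ^ p + b ^ p) := by
  set m := max a b with hm
  have hab : a + b ≤ m + m := add_le_add (le_max_left a b) (le_max_right a b)
  have hm1 : 1 ≤ m := by linarith
  have htm : t ≤ m := by linarith
  have h1p : 1 ≤ m ^ p := Real.one_le_rpow hm1 hp.le
  have htp : t ^ p ≤ m ^ p := Real.rpow_le_rpow ht htm hp.le
  have hmp : m ^ p ≤ a ^ p + b ^ p := by
    rcases max_cases a b with ⟨h, _⟩ | ⟨h, _⟩ <;> rw [hm, h]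
    · linarith [Real.rpow_nonneg hb p]
    · linarith [Real.rpow_nonneg ha p]
  linarith

theorem stmt_10 {n : ℕ} (hn : 2 ≤ n) (p : ℝ) (hp : 0 < p)
    (f : ℝ → ℝ → ℝ)
    (hf_cont : ContinuousOn (fun q : ℝ × ℝ => f q.1 q.2) (Set.Ici 0 ×ˢ Set.Ioi 0))
    (hf_pos : ∀ α : ℝ, 0 ≤ α → ∀ β : ℝ, 0 < β → 0 < f α β)
    (u : EuclideanSpace ℝ (Fin n) → ℝ)
    (hu_pos : ∀ x : EuclideanSpace ℝ (Fin n), x ≠ 0 → 0 < u x)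
    (hu_cont : ContinuousOn u {(0 : EuclideanSpace ℝ (Fin n))}ᶜ)
    (hIE : ∀ x : EuclideanSpace ℝ (Fin n), x ≠ 0 →
      u x = ∫ y : EuclideanSpace ℝ (Fin n), ‖x - y‖ ^ p * f ‖y‖ (u y)) :
    Integrable (fun z : EuclideanSpace ℝ (Fin n) => (1 + ‖z‖ ^ p) * f ‖z‖ (u z)) := by
  haveI : NeZero n := ⟨by omega⟩
  set e : EuclideanSpace ℝ (Fin n) := EuclideanSpace.single (0 : Fin n) (1 : ℝ) with he_def
  have he : ‖e‖ = 1 := by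
    rw [he_def, EuclideanSpace.norm_single]; norm_num
  have hene : e ≠ 0 := by
    intro h
    rw [h, norm_zero] at he
    norm_num at he
  have hmene : -e ≠ 0 := neg_ne_zero.2 hene
  haveI : Nontrivial (EuclideanSpace ℝ (Fin n)) := ⟨e, 0, hene⟩
  -- each integrand is integrable, else the integral would be 0
  have key : ∀ x : EuclideanSpace ℝ (Fin n), x ≠ 0 →
      Integrable (fun y : EuclideanSpace ℝ (Fin n) => ‖x - y‖ ^ p * f ‖y‖ (u y)) := by
    intro x hx
    by_contra hI
    have h0 := hIE x hx
    rw [integral_undef hI] at h0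
    exact absurd h0 (hu_pos x hx).ne'
  have h₁ := key e hene
  have h₂ := key (-e) hmene
  -- measurability of z ↦ f ‖z‖ (u z)
  have hS : MeasurableSet ({(0 : EuclideanSpace ℝ (Fin n))}ᶜ) := (measurableSet_singleton _).compl
  have hg_cont : ContinuousOn (fun z : EuclideanSpace ℝ (Fin n) => f ‖z‖ (u z))
      {(0 : EuclideanSpace ℝ (Fin n))}ᶜ := by
    have := hf_cont.comp (f := fun z : EuclideanSpace ℝ (Fin n) => (‖z‖, u z))
      (ContinuousOn.prodMk continuous_norm.continuousOn hu_cont)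
      (fun z hz => ⟨norm_nonneg z, hu_pos z hz⟩)
    exact this
  have hae0 : ∀ᵐ z : EuclideanSpace ℝ (Fin n), z ≠ 0 := by
    have h0 : volume ({(0 : EuclideanSpace ℝ (Fin n))} : Set (EuclideanSpace ℝ (Fin n))) = 0 :=
      measure_singleton 0
    rw [ae_iff]
    simpa using h0
  have hg_meas : AEStronglyMeasurable (fun z : EuclideanSpace ℝ (Fin n) => f ‖z‖ (u z)) volume := by
    have := hg_cont.aestronglyMeasurable (μ := volume) hS
    rwa [Measure.restrict_eq_self_of_ae_mem (by simpa using hae0)] at this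
  -- the main comparison
  apply Integrable.mono' (g := fun z : EuclideanSpace ℝ (Fin n) =>
      2 * (‖e - z‖ ^ p * f ‖z‖ (u z) + ‖(-e) - z‖ ^ p * f ‖z‖ (u z)))
      ((h₁.add h₂).const_mul 2)
  · exact ((continuous_const.add
      (continuous_norm.rpow_const fun z => Or.inr hp.le)).aestronglyMeasurable).mul hg_meas
  · filter_upwards [hae0] with z hz
    have hfz : 0 < f ‖z‖ (u z) := hf_pos _ (norm_nonneg z) _ (hu_pos z hz)
    have hzp : 0 ≤ ‖z‖ ^ p := Real.rpow_nonneg (norm_nonneg z) p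
    have hbound : 1 + ‖z‖ ^ p ≤ 2 * (‖e - z‖ ^ p + ‖(-e) - z‖ ^ p) := by
      apply aux_rpow_bound p _ _ _ hp (norm_nonneg _) (norm_nonneg _) (norm_nonneg _)
      · have h1 : ‖(e - z) - ((-e) - z)‖ ≤ ‖e - z‖ + ‖(-e) - z‖ := norm_sub_le _ _
        have h2e : (e - z) - ((-e) - z) = e + e := by abel
        have h3 : ‖e + e‖ = 2 := by
          rw [← two_smul ℝ e, norm_smul]
          simp [he]
        rw [h2e, h3] at h1
        exact h1
      · have h2z : (e - z) + ((-e) - z) = -(z + z) := by abel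
        have h4 := norm_add_le (e - z) ((-e) - z)
        rw [h2z, norm_neg, ← two_smul ℝ z, norm_smul] at h4
        simp only [Real.norm_ofNat] at h4
        linarith
    have hne : ‖(1 + ‖z‖ ^ p) * f ‖z‖ (u z)‖ = (1 + ‖z‖ ^ p) * f ‖z‖ (u z) := by
      rw [Real.norm_eq_abs, abs_of_nonneg]
      positivity
    rw [hne]
    calc (1 + ‖z‖ ^ p) * f ‖z‖ (u z)
        ≤ 2 * (‖e - z‖ ^ p + ‖(-e) - z‖ ^ p) * f ‖z‖ (u z) :=
          mul_le_mul_of_nonneg_right hbound hfz.le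
      _ = 2 * (‖e - z‖ ^ p * f ‖z‖ (u z) + ‖(-e) - z‖ ^ p * f ‖z‖ (u z)) := by ring
end
end

section
/- Let n ≥ 2 be an integer and p > 0. Let f : [0,∞) × (0,∞) → (0,∞) be continuous and let u : ℝⁿ ∖ {0} → ℝ be a positive continuous solution of the integral equation (IE). Then lim_{|y| → ∞} |y|^{−p} u(y) = ∫_{ℝⁿ} f(|z|, u(z)) dz, and this integral is finite and strictly positive. -/
open MeasureTheory Filter

noncomputable section

private lemma aux_stmt_11 {E : Type*} [NormedAddCommGroup E] [NormedSpace ℝ E]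
    [MeasureSpace E] [BorelSpace E] [Nontrivial E] [SecondCountableTopology E]
    [(volume : Measure E).IsAddHaarMeasure] [NullSingletonClass (volume : Measure E)]
    (p : ℝ) (hp : 0 < p)
    (f : ℝ → ℝ → ℝ)
    (hf_cont : ContinuousOn (fun q : ℝ × ℝ => f q.1 q.2) (Set.Ici 0 ×ˢ Set.Ioi 0))
    (hf_pos : ∀ α : ℝ, 0 ≤ α → ∀ β : ℝ, 0 < β → 0 < f α β)
    (u : E → ℝ)
    (hu_pos : ∀ x : E, x ≠ 0 → 0 < u x)
    (hu_cont : ContinuousOn u {(0 : E)}ᶜ)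
    (hIE : ∀ x : E, x ≠ 0 → u x = ∫ y : E, ‖x - y‖ ^ p * f ‖y‖ (u y)) :
    Integrable (fun z : E => f ‖z‖ (u z)) ∧
    (0 < ∫ z : E, f ‖z‖ (u z)) ∧
    Tendsto (fun y : E => ‖y‖ ^ (-p) * u y) (comap norm atTop)
      (nhds (∫ z : E, f ‖z‖ (u z))) := by
  set g : E → ℝ := fun z => f ‖z‖ (u z) with hg
  have h0 : (volume ({0} : Set E)) = 0 := measure_singleton 0
  have hae : ∀ᵐ z : E, z ≠ 0 := by
    rw [ae_iff]
    convert h0 using 2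
    ext z; simp
  have hg_cont : ContinuousOn g {(0:E)}ᶜ := by
    apply hf_cont.comp (ContinuousOn.prodMk (continuous_norm.continuousOn) hu_cont)
    intro z hz
    exact ⟨norm_nonneg z, hu_pos z (by simpa using hz)⟩
  have hg_meas : AEStronglyMeasurable g volume := by
    have hr : (volume : Measure E).restrict {(0:E)}ᶜ = volume :=
      Measure.restrict_eq_self_of_ae_mem hae
    rw [← hr]
    exact hg_cont.aestronglyMeasurable (measurableSet_singleton 0).compl
  have hg_nonneg : ∀ᵐ z : E, 0 ≤ g z := by
    filter_upwards [hae] with z hz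
    exact (hf_pos _ (norm_nonneg z) _ (hu_pos z hz)).le
  -- integrability of kernel integrand for each x ≠ 0
  have hker : ∀ x : E, x ≠ 0 → Integrable (fun z : E => ‖x - z‖ ^ p * g z) := by
    intro x hx
    by_contra h
    have h2 := hIE x hx
    rw [integral_undef h] at h2
    exact absurd h2 (by linarith [hu_pos x hx])
  have hker_meas : ∀ x : E, AEStronglyMeasurable (fun z : E => ‖x - z‖ ^ p * g z) volume :=
    fun x => (((continuous_const.sub continuous_id).norm.rpow_const
      (fun z => Or.inr hp.le)).aestronglyMeasurable).mul hg_meas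
  -- a point of norm 1
  obtain ⟨x₀, hx₀⟩ := exists_ne (0 : E)
  set e : E := ‖x₀‖⁻¹ • x₀ with he
  have hx₀n : (0:ℝ) < ‖x₀‖ := norm_pos_iff.2 hx₀
  have hne : ‖e‖ = 1 := by
    rw [he, norm_smul, norm_inv, norm_norm, inv_mul_cancel₀ hx₀n.ne']
  have he0 : e ≠ 0 := by
    intro h; rw [h] at hne; simp at hne
  have hme0 : (-e : E) ≠ 0 := by simpa using he0
  -- integrability of g
  have hg_int : Integrable g := by
    apply Integrable.mono' (((hker e he0).add (hker (-e) hme0))) hg_meas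
    filter_upwards [hg_nonneg] with z hz
    rw [Real.norm_of_nonneg hz]
    have htri : (2:ℝ) ≤ ‖e - z‖ + ‖(-e) - z‖ := by
      have h2 : ‖e - (-e)‖ = 2 := by
        rw [sub_neg_eq_add, ← two_smul ℝ e, norm_smul]
        simp [hne]
      calc (2:ℝ) = ‖e - (-e)‖ := h2.symm
        _ ≤ ‖e - z‖ + ‖z - (-e)‖ := norm_sub_le_norm_sub_add_norm_sub e z (-e)
        _ = ‖e - z‖ + ‖(-e) - z‖ := by rw [norm_sub_rev z]
    rcases le_or_gt 1 ‖e - z‖ with h1 | h1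
    · have h3 : (1:ℝ) ≤ ‖e - z‖ ^ p := Real.one_le_rpow h1 hp.le
      have h4 := Real.rpow_nonneg (norm_nonneg ((-e) - z)) p
      simp only [Pi.add_apply]
      nlinarith [mul_nonneg (sub_nonneg.2 h3) hz, mul_nonneg h4 hz]
    · have h2 : (1:ℝ) ≤ ‖(-e) - z‖ := by linarith
      have h3 : (1:ℝ) ≤ ‖(-e) - z‖ ^ p := Real.one_le_rpow h2 hp.le
      have h4 := Real.rpow_nonneg (norm_nonneg (e - z)) p
      simp only [Pi.add_apply]
      nlinarith [mul_nonneg (sub_nonneg.2 h3) hz, mul_nonneg h4 hz]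
  -- positivity
  have hg_pos : 0 < ∫ z : E, g z := by
    rw [integral_pos_iff_support_of_nonneg_ae hg_nonneg hg_int]
    have hsub : Metric.ball e (1/2) ⊆ Function.support g := by
      intro z hz
      have hz0 : z ≠ 0 := by
        intro h
        rw [h] at hz
        rw [Metric.mem_ball, dist_zero_left, hne] at hz
        norm_num at hz
      exact ne_of_gt (hf_pos _ (norm_nonneg z) _ (hu_pos z hz0))
    exact lt_of_lt_of_le (Metric.measure_ball_pos volume e (by norm_num)) (measure_mono hsub)
  -- integrability of the dominating bound
  have hbound_int : Integrable (fun z : E => (1 + ‖z‖) ^ p * g z) := by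
    apply Integrable.mono' ((hg_int.const_mul ((4:ℝ)^p)).add ((hker e he0).const_mul ((4:ℝ)^p)))
    · exact (((continuous_const.add continuous_norm).rpow_const
        (fun z => Or.inr hp.le)).aestronglyMeasurable).mul hg_meas
    filter_upwards [hg_nonneg] with z hz
    have h1 : (0:ℝ) ≤ (1 + ‖z‖) ^ p := Real.rpow_nonneg (by positivity) p
    rw [Real.norm_of_nonneg (mul_nonneg h1 hz)]
    have key : (1 + ‖z‖) ^ p ≤ (4:ℝ)^p * (1 + ‖e - z‖ ^ p) := by
      have h2 : 1 + ‖z‖ ≤ 2 + ‖e - z‖ := by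
        have h5 : ‖z‖ ≤ ‖z - e‖ + ‖e‖ := by
          calc ‖z‖ = ‖z - e + e‖ := by rw [sub_add_cancel]
            _ ≤ ‖z - e‖ + ‖e‖ := norm_add_le _ _
        rw [hne] at h5
        rw [norm_sub_rev e z]
        linarith
      have h3 : (2:ℝ) + ‖e - z‖ ≤ 4 * max 1 ‖e - z‖ := by
        rcases le_total ‖e - z‖ 1 with h | h
        · rw [max_eq_left h]; linarith
        · rw [max_eq_right h]; linarith
      calc (1 + ‖z‖) ^ p ≤ (4 * max 1 ‖e - z‖) ^ p :=
            Real.rpow_le_rpow (by positivity) (le_trans h2 h3) hp.le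
        _ = (4:ℝ)^p * (max 1 ‖e - z‖)^p := Real.mul_rpow (by norm_num) (le_max_of_le_left zero_le_one)
        _ ≤ (4:ℝ)^p * (1 + ‖e - z‖ ^ p) := by
            apply mul_le_mul_of_nonneg_left _ (Real.rpow_nonneg (by norm_num) p)
            rcases le_total ‖e - z‖ 1 with h | h
            · rw [max_eq_left h, Real.one_rpow]
              have := Real.rpow_nonneg (norm_nonneg (e - z)) p
              linarith
            · rw [max_eq_right h]
              have : (1:ℝ) ≤ ‖e - z‖ ^ p := Real.one_le_rpow h hp.le
              linarith
    calc (1 + ‖z‖) ^ p * g z ≤ ((4:ℝ)^p * (1 + ‖e - z‖ ^ p)) * g z :=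
          mul_le_mul_of_nonneg_right key hz
      _ = (4:ℝ)^p * g z + (4:ℝ)^p * (‖e - z‖ ^ p * g z) := by ring
  refine ⟨hg_int, hg_pos, ?_⟩
  -- the limit
  set l : Filter E := comap norm atTop with hl
  have hnorm_top : Tendsto (fun y : E => ‖y‖) l atTop := tendsto_comap
  have hev1 : ∀ᶠ y in l, (1:ℝ) ≤ ‖y‖ := hnorm_top.eventually_ge_atTop 1
  have hmain : Tendsto (fun y : E => ∫ z : E, ‖y‖ ^ (-p) * (‖y - z‖ ^ p * g z)) l
      (nhds (∫ z : E, g z)) := by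
    apply tendsto_integral_filter_of_dominated_convergence
      (fun z => (1 + ‖z‖) ^ p * |g z|)
    · filter_upwards with y
      exact ((hker_meas y).const_mul _)
    · filter_upwards [hev1] with y hy
      filter_upwards with z
      have hy0 : (0:ℝ) < ‖y‖ := by linarith
      have h1 : ‖y - z‖ ≤ ‖y‖ * (1 + ‖z‖) := by
        have h5 : ‖y - z‖ ≤ ‖y‖ + ‖z‖ := norm_sub_le y z
        have h6 : ‖z‖ ≤ ‖y‖ * ‖z‖ := le_mul_of_one_le_left (norm_nonneg z) hy
        calc ‖y - z‖ ≤ ‖y‖ + ‖z‖ := h5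
          _ ≤ ‖y‖ + ‖y‖ * ‖z‖ := by linarith
          _ = ‖y‖ * (1 + ‖z‖) := by ring
      have h2 : ‖y - z‖ ^ p ≤ ‖y‖ ^ p * (1 + ‖z‖) ^ p := by
        calc ‖y - z‖ ^ p ≤ (‖y‖ * (1 + ‖z‖)) ^ p :=
              Real.rpow_le_rpow (norm_nonneg _) h1 hp.le
          _ = ‖y‖ ^ p * (1 + ‖z‖) ^ p := Real.mul_rpow (norm_nonneg y) (by positivity)
      rw [norm_mul, norm_mul, Real.norm_of_nonneg (Real.rpow_nonneg (norm_nonneg y) (-p)),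
        Real.norm_of_nonneg (Real.rpow_nonneg (norm_nonneg _) p), ← mul_assoc]
      apply mul_le_mul_of_nonneg_right _ (abs_nonneg (g z))
      rw [Real.rpow_neg (norm_nonneg y), inv_mul_le_iff₀ (Real.rpow_pos_of_pos hy0 p)]
      exact h2
    · apply hbound_int.congr
      filter_upwards [hg_nonneg] with z hz
      rw [abs_of_nonneg hz]
    · filter_upwards with z
      have hratio : Tendsto (fun y : E => ‖y - z‖ / ‖y‖) l (nhds 1) := by
        have hzero : Tendsto (fun y : E => ‖z‖ / ‖y‖) l (nhds 0) :=
          tendsto_const_nhds.div_atTop hnorm_top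
        have hlow : Tendsto (fun y : E => 1 - ‖z‖ / ‖y‖) l (nhds 1) := by
          simpa using tendsto_const_nhds.sub hzero
        have hhigh : Tendsto (fun y : E => 1 + ‖z‖ / ‖y‖) l (nhds 1) := by
          simpa using tendsto_const_nhds.add hzero
        apply tendsto_of_tendsto_of_tendsto_of_le_of_le' hlow hhigh
        · filter_upwards [hev1] with y hy
          have hy0 : (0:ℝ) < ‖y‖ := by linarith
          have h5 : ‖y‖ - ‖z‖ ≤ ‖y - z‖ := norm_sub_norm_le y z
          calc 1 - ‖z‖ / ‖y‖ = (‖y‖ - ‖z‖) / ‖y‖ := by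
                rw [sub_div, div_self hy0.ne']
            _ ≤ ‖y - z‖ / ‖y‖ := by gcongr
        · filter_upwards [hev1] with y hy
          have hy0 : (0:ℝ) < ‖y‖ := by linarith
          calc ‖y - z‖ / ‖y‖ ≤ (‖y‖ + ‖z‖) / ‖y‖ := by
                gcongr
                exact norm_sub_le y z
            _ = 1 + ‖z‖ / ‖y‖ := by rw [add_div, div_self hy0.ne']
      have h7 := (hratio.rpow_const (Or.inr hp.le)).mul_const (g z)
      rw [Real.one_rpow, one_mul] at h7
      apply h7.congr'
      filter_upwards [hev1] with y hy
      have hy0 : (0:ℝ) < ‖y‖ := by linarith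
      rw [Real.div_rpow (norm_nonneg _) (norm_nonneg _), Real.rpow_neg (norm_nonneg y),
        div_eq_inv_mul, mul_assoc]
  apply hmain.congr'
  filter_upwards [hev1] with y hy
  have hy0 : y ≠ 0 := by
    intro h
    rw [h, norm_zero] at hy
    linarith
  rw [integral_const_mul, hIE y hy0]

theorem stmt_11 {n : ℕ} (hn : 2 ≤ n) (p : ℝ) (hp : 0 < p)
    (f : ℝ → ℝ → ℝ)
    (hf_cont : ContinuousOn (fun q : ℝ × ℝ => f q.1 q.2) (Set.Ici 0 ×ˢ Set.Ioi 0))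
    (hf_pos : ∀ α : ℝ, 0 ≤ α → ∀ β : ℝ, 0 < β → 0 < f α β)
    (u : EuclideanSpace ℝ (Fin n) → ℝ)
    (hu_pos : ∀ x : EuclideanSpace ℝ (Fin n), x ≠ 0 → 0 < u x)
    (hu_cont : ContinuousOn u {(0 : EuclideanSpace ℝ (Fin n))}ᶜ)
    (hIE : ∀ x : EuclideanSpace ℝ (Fin n), x ≠ 0 →
      u x = ∫ y : EuclideanSpace ℝ (Fin n), ‖x - y‖ ^ p * f ‖y‖ (u y)) :
    Integrable (fun z : EuclideanSpace ℝ (Fin n) => f ‖z‖ (u z)) ∧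
    (0 < ∫ z : EuclideanSpace ℝ (Fin n), f ‖z‖ (u z)) ∧
    Tendsto (fun y : EuclideanSpace ℝ (Fin n) => ‖y‖ ^ (-p) * u y)
      (comap norm atTop)
      (nhds (∫ z : EuclideanSpace ℝ (Fin n), f ‖z‖ (u z))) := by
  haveI : Nonempty (Fin n) := ⟨⟨0, by omega⟩⟩
  exact aux_stmt_11 p hp f hf_cont hf_pos u hu_pos hu_cont hIE
end
end

section
/- Let n ≥ 2 be an integer, p > 0, x ∈ ℝⁿ, λ̄ > 0 and δ̄ ∈ (0,1). There exists a constant C > 0 such that for every λ ∈ [λ̄, λ̄ + δ̄] and every y ∈ ℝⁿ with λ ≤ |y−x| ≤ λ̄ + δ̄, one has ∫_{{z : λ ≤ |z−x| ≤ λ̄ + δ̄}} K(x,λ;y,z) dz ≤ C (|y−x| − λ). -/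
open MeasureTheory

noncomputable section

section Aux

open Real Set

private theorem bern_ge {A B q : ℝ} (hq : 1 ≤ q) (hB : 0 ≤ B) (hBA : B ≤ A) :
    A ^ q - B ^ q ≤ q * A ^ (q - 1) * (A - B) := by
  rcases eq_or_lt_of_le (hB.trans hBA) with hA | hA
  · have hB0 : B = 0 := le_antisymm (hA ▸ hBA) hB
    simp [← hA, hB0, Real.zero_rpow (by linarith : q ≠ 0)]
  · set t := B / A with ht
    have ht0 : 0 ≤ t := div_nonneg hB hA.le
    have hbern : 1 + q * (t - 1) ≤ t ^ q := by
      have := one_add_mul_self_le_rpow_one_add (s := t - 1) (by linarith) hq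
      simpa using this
    have hBt : B = t * A := by rw [ht, div_mul_cancel₀ _ hA.ne']
    have hBq : B ^ q = t ^ q * A ^ q := by
      rw [hBt, Real.mul_rpow ht0 hA.le]
    have hAq : A ^ q = A ^ (q - 1) * A := by
      rw [← Real.rpow_add_one hA.ne' (q - 1)]; ring_nf
    have hAqpos : 0 < A ^ q := Real.rpow_pos_of_pos hA _
    calc A ^ q - B ^ q = A ^ q * (1 - t ^ q) := by rw [hBq]; ring
      _ ≤ A ^ q * (q * (1 - t)) := mul_le_mul_of_nonneg_left (by linarith) hAqpos.le
      _ = q * A ^ (q - 1) * (A - B) := by rw [hBt, hAq]; ring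

private theorem bern_le {A B q : ℝ} (hq0 : 0 < q) (hq : q ≤ 1) (hB : 0 < B) (hBA : B ≤ A) :
    A ^ q - B ^ q ≤ q * B ^ (q - 1) * (A - B) := by
  set s := A / B - 1 with hs
  have hs0 : 0 ≤ s := by
    rw [hs, sub_nonneg]; exact (one_le_div hB).mpr hBA
  have hbern : (1 + s) ^ q ≤ 1 + q * s :=
    rpow_one_add_le_one_add_mul_self (by linarith) hq0.le hq
  have hA : A = (1 + s) * B := by rw [hs, add_sub_cancel, div_mul_cancel₀ _ hB.ne']
  have hAq : A ^ q = (1 + s) ^ q * B ^ q := by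
    rw [hA, Real.mul_rpow (by linarith) hB.le]
  have hBq : B ^ q = B ^ (q - 1) * B := by
    rw [← Real.rpow_add_one hB.ne' (q - 1)]; ring_nf
  have hBqpos : 0 < B ^ q := Real.rpow_pos_of_pos hB _
  calc A ^ q - B ^ q = B ^ q * ((1 + s) ^ q - 1) := by rw [hAq]; ring
    _ ≤ B ^ q * (q * s) := mul_le_mul_of_nonneg_left (by linarith) hBqpos.le
    _ = q * B ^ (q - 1) * (A - B) := by rw [hA, hBq]; ring

private theorem rpow_sq_eq {a : ℝ} (ha : 0 ≤ a) (q : ℝ) : (a ^ 2) ^ q = a ^ (2 * q) := by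
  rw [← Real.rpow_natCast a 2, ← Real.rpow_mul ha]; norm_num

private theorem abs_rpow_integrable {c ρ : ℝ} (hc : -1 < c) (hρ : 0 < ρ) :
    IntegrableOn (fun t : ℝ => |t| ^ c) (Icc (-ρ) ρ) := by
  have h1 : IntegrableOn (fun t : ℝ => |t| ^ c) (Icc 0 ρ) := by
    rw [integrableOn_Icc_iff_integrableOn_Ioo]
    have := (intervalIntegral.integrableOn_Ioo_rpow_iff hρ).mpr hc
    apply this.congr_fun (fun t ht => by rw [abs_of_pos ht.1]) measurableSet_Ioo
  have h2 : IntegrableOn (fun t : ℝ => |t| ^ c) (Icc (-ρ) 0) := by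
    have hneg := (Measure.measurePreserving_neg (volume : Measure ℝ)).integrableOn_comp_preimage
      (MeasurableEquiv.neg ℝ).measurableEmbedding (s := Icc 0 ρ) (f := fun t : ℝ => |t| ^ c)
    have : IntegrableOn ((fun t : ℝ => |t| ^ c) ∘ Neg.neg) (Neg.neg ⁻¹' Icc 0 ρ) := by
      rw [hneg]; exact h1
    have hpre : (Neg.neg ⁻¹' Icc 0 ρ : Set ℝ) = Icc (-ρ) 0 := by
      ext t
      simp only [mem_preimage, mem_Icc, neg_le, le_neg]
      constructor <;> intro h <;> exact ⟨by linarith [h.1, h.2], by linarith [h.1, h.2]⟩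
    rw [hpre] at this
    exact this.congr_fun (fun t _ => by simp [Function.comp]) measurableSet_Icc
  have := h2.union h1
  apply this.mono_set
  intro t ht
  rcases le_or_gt t 0 with h | h
  · exact Or.inl ⟨ht.1, h⟩
  · exact Or.inr ⟨h.le, ht.2⟩

private theorem riesz_integrable {n : ℕ} (hn : 2 ≤ n) {α ρ : ℝ} (hα : -2 < α) (hα0 : α < 0)
    (hρ : 0 < ρ) :
    IntegrableOn (fun z : EuclideanSpace ℝ (Fin n) => ‖z‖ ^ α)
      (Metric.closedBall 0 ρ) := by
  rw [← integrable_indicator_iff measurableSet_closedBall]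
  set F : EuclideanSpace ℝ (Fin n) → ℝ :=
    (Metric.closedBall (0 : EuclideanSpace ℝ (Fin n)) ρ).indicator
      (fun z => ‖z‖ ^ α) with hF
  have mp := EuclideanSpace.volume_preserving_symm_measurableEquiv_toLp (Fin n)
  set e := (MeasurableEquiv.toLp 2 (Fin n → ℝ)).symm with he
  rw [← (mp.symm).integrable_comp_emb e.symm.measurableEmbedding]
  set i0 : Fin n := ⟨0, by omega⟩ with hi0
  set i1 : Fin n := ⟨1, by omega⟩ with hi1
  have hne : i0 ≠ i1 := by simp [hi0, hi1, Fin.ext_iff]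
  set g : ℝ → ℝ := (Icc (-ρ) ρ).indicator (fun t => |t| ^ (α / 2)) with hg
  set gone : ℝ → ℝ := (Icc (-ρ) ρ).indicator (fun _ => 1) with hgone
  have hgint : Integrable g :=
    (abs_rpow_integrable (by linarith) hρ).integrable_indicator measurableSet_Icc
  have hgoneint : Integrable gone := by
    refine (integrableOn_const (ne_of_lt ?_)).integrable_indicator measurableSet_Icc
    exact measure_Icc_lt_top
  set f : Fin n → ℝ → ℝ := fun i => if i = i0 ∨ i = i1 then g else gone with hf'
  have hfint : ∀ i, Integrable (f i) := by
    intro i; by_cases h : i = i0 ∨ i = i1 <;> simp [hf', h, hgint, hgoneint]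
  have hfnonneg : ∀ i t, 0 ≤ f i t := by
    intro i t
    by_cases h : i = i0 ∨ i = i1 <;>
      simp only [hf', h, if_true, if_false] <;>
      exact indicator_nonneg (fun t _ => by positivity) t
  set H : (Fin n → ℝ) → ℝ := fun v => ∏ i, f i (v i) with hH
  have hHint : Integrable H := Integrable.fintype_prod (f := f) hfint
  have hae : ∀ᵐ v : Fin n → ℝ, v i0 ≠ 0 ∧ v i1 ≠ 0 := by
    rw [volume_pi]
    exact (Measure.ae_eval_ne _ i0 0).and (Measure.ae_eval_ne _ i1 0)
  refine hHint.mono' ?_ ?_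
  · have hFm : Measurable F := by
      apply Measurable.indicator _ measurableSet_closedBall
      fun_prop
    exact (hFm.comp e.symm.measurable).aestronglyMeasurable
  · filter_upwards [hae] with v hv
    rcases hv with ⟨hv0, hv1⟩
    by_cases hz : e.symm v ∈ Metric.closedBall (0 : EuclideanSpace ℝ (Fin n)) ρ
    · set z := e.symm v with hzdef
      have hcoord : ∀ i, (z : EuclideanSpace ℝ (Fin n)) i = v i := fun i => rfl
      have hznorm : ‖z‖ ≤ ρ := by rwa [Metric.mem_closedBall, dist_zero_right] at hz
      have hsum : ‖z‖ ^ 2 = ∑ i, (v i) ^ 2 := by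
        rw [EuclideanSpace.norm_eq]
        rw [Real.sq_sqrt (Finset.sum_nonneg fun i _ => sq_nonneg _)]
        exact Finset.sum_congr rfl fun i _ => by rw [Real.norm_eq_abs, sq_abs]; rfl
      have hcle : ∀ i, |v i| ≤ ‖z‖ := by
        intro i
        have h1 : (v i) ^ 2 ≤ ‖z‖ ^ 2 := by
          rw [hsum]
          exact Finset.single_le_sum (fun j _ => sq_nonneg (v j)) (Finset.mem_univ i)
        have := Real.sqrt_le_sqrt h1
        rwa [Real.sqrt_sq_eq_abs, Real.sqrt_sq (norm_nonneg z)] at this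
      have hIcc : ∀ i, v i ∈ Icc (-ρ) ρ := fun i =>
        abs_le.mp ((hcle i).trans hznorm)
      have hother : ∀ i, ¬(i = i0 ∨ i = i1) → f i (v i) = 1 := by
        intro i h
        simp only [hf', h, if_false, hgone]
        exact indicator_of_mem (hIcc i) _
      have hgi : ∀ i, (i = i0 ∨ i = i1) → f i (v i) = |v i| ^ (α / 2) := by
        intro i h
        simp only [hf', h, if_true, hg]
        exact indicator_of_mem (hIcc i) _
      have hHval : H v = |v i0| ^ (α / 2) * |v i1| ^ (α / 2) := by
        show (∏ i, f i (v i)) = _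
        rw [← Finset.mul_prod_erase Finset.univ (fun i => f i (v i)) (Finset.mem_univ i0)]
        rw [← Finset.mul_prod_erase _ (fun i => f i (v i))
          (Finset.mem_erase.mpr ⟨hne.symm, Finset.mem_univ i1⟩)]
        rw [Finset.prod_eq_one, hgi i0 (Or.inl rfl), hgi i1 (Or.inr rfl), mul_one]
        intro i hi
        simp only [Finset.mem_erase] at hi
        exact hother i (by tauto)
      set a := |v i0| with ha
      set b := |v i1| with hb
      have hapos : 0 < a := abs_pos.mpr hv0
      have hbpos : 0 < b := abs_pos.mpr hv1
      have h2ab : 2 * (a * b) ≤ ‖z‖ ^ 2 := by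
        have : a ^ 2 + b ^ 2 ≤ ‖z‖ ^ 2 := by
          rw [hsum, ha, hb, sq_abs, sq_abs]
          have := Finset.sum_le_sum_of_subset_of_nonneg
            (Finset.subset_univ {i0, i1}) (fun i _ _ => sq_nonneg (v i))
          rwa [Finset.sum_pair hne] at this
        nlinarith [sq_nonneg (a - b)]
      have hkey : ‖z‖ ^ α ≤ a ^ (α / 2) * b ^ (α / 2) := by
        calc ‖z‖ ^ α = (‖z‖ ^ 2) ^ (α / 2) := by
              rw [rpow_sq_eq (norm_nonneg z)]; ring_nf
          _ ≤ (2 * (a * b)) ^ (α / 2) :=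
              Real.rpow_le_rpow_of_nonpos (by positivity) h2ab (by linarith)
          _ = 2 ^ (α / 2) * (a * b) ^ (α / 2) :=
              Real.mul_rpow (by norm_num) (by positivity)
          _ ≤ 1 * (a * b) ^ (α / 2) :=
              mul_le_mul_of_nonneg_right
                (Real.rpow_le_one_of_one_le_of_nonpos (by norm_num) (by linarith))
                (by positivity)
          _ = a ^ (α / 2) * b ^ (α / 2) := by
              rw [one_mul, Real.mul_rpow hapos.le hbpos.le]
      have hFval : F z = ‖z‖ ^ α := indicator_of_mem hz _
      calc ‖(F ∘ e.symm) v‖ = ‖z‖ ^ α := by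
            rw [Function.comp_apply, ← hzdef, hFval, Real.norm_eq_abs,
              abs_of_nonneg (Real.rpow_nonneg (norm_nonneg z) α)]
        _ ≤ a ^ (α / 2) * b ^ (α / 2) := hkey
        _ = H v := hHval.symm
    · have : (F ∘ e.symm) v = 0 := by
        simp only [Function.comp_apply, hF]
        exact indicator_of_notMem hz _
      rw [this, norm_zero]
      exact Finset.prod_nonneg fun i _ => hfnonneg i (v i)

private theorem riesz_shift {n : ℕ} (y : EuclideanSpace ℝ (Fin n)) (α ρ : ℝ)
    (h : IntegrableOn (fun z : EuclideanSpace ℝ (Fin n) => ‖z‖ ^ α) (Metric.closedBall 0 ρ)) :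
    IntegrableOn (fun z : EuclideanSpace ℝ (Fin n) => ‖y - z‖ ^ α) (Metric.closedBall y ρ) ∧
    ∫ z in Metric.closedBall y ρ, ‖y - z‖ ^ α =
      ∫ u in Metric.closedBall (0 : EuclideanSpace ℝ (Fin n)) ρ, ‖u‖ ^ α := by
  have hmp : MeasurePreserving (fun z : EuclideanSpace ℝ (Fin n) => y - z) volume volume :=
    Measure.measurePreserving_sub_left volume y
  have hemb : MeasurableEmbedding (fun z : EuclideanSpace ℝ (Fin n) => y - z) :=
    (MeasurableEquiv.subLeft y).measurableEmbedding
  have hpre : (fun z : EuclideanSpace ℝ (Fin n) => y - z) ⁻¹' Metric.closedBall 0 ρ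
      = Metric.closedBall y ρ := by
    ext z
    simp [Metric.mem_closedBall, dist_eq_norm, norm_sub_rev]
  constructor
  · have := (hmp.integrableOn_comp_preimage hemb
      (f := fun u : EuclideanSpace ℝ (Fin n) => ‖u‖ ^ α)
      (s := Metric.closedBall 0 ρ)).mpr h
    rwa [hpre] at this
  · have := hmp.setIntegral_preimage_emb hemb
      (fun u : EuclideanSpace ℝ (Fin n) => ‖u‖ ^ α) (Metric.closedBall 0 ρ)
    rwa [hpre] at this

private theorem kernel_decomp {n : ℕ} {p : ℝ} (hp : 0 < p) (x : EuclideanSpace ℝ (Fin n))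
    {lam : ℝ} (hlam : 0 < lam) (y z : EuclideanSpace ℝ (Fin n)) :
    kernelK p x lam y z =
      ((‖z - x‖ / lam * ‖y - inversion x lam z‖) ^ 2) ^ (p / 2)
        - (‖y - z‖ ^ 2) ^ (p / 2) := by
  rw [rpow_sq_eq (by positivity), rpow_sq_eq (norm_nonneg _),
    show 2 * (p / 2) = p by ring,
    Real.mul_rpow (by positivity) (norm_nonneg _)]
  rfl

private theorem AB_diff {n : ℕ} (x : EuclideanSpace ℝ (Fin n)) {lam : ℝ} (hlam : 0 < lam)
    (y z : EuclideanSpace ℝ (Fin n)) (hz : z ≠ x) :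
    (‖z - x‖ / lam * ‖y - inversion x lam z‖) ^ 2 - ‖y - z‖ ^ 2 =
      (‖y - x‖ ^ 2 - lam ^ 2) * (‖z - x‖ ^ 2 - lam ^ 2) / lam ^ 2 := by
  have hs0 : ‖z - x‖ ≠ 0 := by
    simpa [sub_eq_zero] using hz
  have hinv : y - inversion x lam z = (y - x) - (lam ^ 2 / ‖z - x‖ ^ 2) • (z - x) := by
    simp only [inversion]
    rw [sub_add_eq_sub_sub]
  have h1 : ‖y - inversion x lam z‖ ^ 2
      = ‖y - x‖ ^ 2 - 2 * ((lam ^ 2 / ‖z - x‖ ^ 2) * (inner ℝ (y - x) (z - x) : ℝ))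
        + (lam ^ 2 / ‖z - x‖ ^ 2) ^ 2 * ‖z - x‖ ^ 2 := by
    rw [hinv, norm_sub_sq_real, real_inner_smul_right, norm_smul, Real.norm_eq_abs,
      mul_pow, sq_abs]
  have h2 : ‖y - z‖ ^ 2 = ‖y - x‖ ^ 2 - 2 * (inner ℝ (y - x) (z - x) : ℝ) + ‖z - x‖ ^ 2 := by
    rw [← sub_sub_sub_cancel_right y z x, norm_sub_sq_real]
  rw [mul_pow, h1, h2]
  field_simp
  ring

end Aux

set_option maxHeartbeats 1000000

theorem stmt_13 {n : ℕ} (hn : 2 ≤ n) (p : ℝ) (hp : 0 < p)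
    (x : EuclideanSpace ℝ (Fin n)) (lamBar delBar : ℝ)
    (hlamBar : 0 < lamBar) (hdelBar : delBar ∈ Set.Ioo (0 : ℝ) 1) :
    ∃ C : ℝ, 0 < C ∧
      ∀ lam ∈ Set.Icc lamBar (lamBar + delBar),
        ∀ y : EuclideanSpace ℝ (Fin n),
          lam ≤ ‖y - x‖ → ‖y - x‖ ≤ lamBar + delBar →
          (∫ z in {z : EuclideanSpace ℝ (Fin n) |
              lam ≤ ‖z - x‖ ∧ ‖z - x‖ ≤ lamBar + delBar},
            kernelK p x lam y z) ≤ C * (‖y - x‖ - lam) := by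
  obtain ⟨hd0, hd1⟩ := hdelBar
  set R : ℝ := lamBar + delBar with hRdef
  have hR0 : 0 < R := by positivity
  set q : ℝ := p / 2 with hqdef
  have hq0 : 0 < q := by positivity
  set D : ℝ := 2 * R * R ^ 2 / lamBar ^ 2 with hDdef
  have hD0 : 0 ≤ D := by positivity
  set M : ℝ := 4 * R ^ 2 + R ^ 2 * R ^ 2 / lamBar ^ 2 with hMdef
  have hM0 : 0 ≤ M := by positivity
  -- shared facts about the integrand
  have hfacts : ∀ lam ∈ Set.Icc lamBar R, ∀ y : EuclideanSpace ℝ (Fin n),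
      lam ≤ ‖y - x‖ → ‖y - x‖ ≤ R →
      ∀ z, lam ≤ ‖z - x‖ → ‖z - x‖ ≤ R →
        ‖y - z‖ ^ 2 ≤ (‖z - x‖ / lam * ‖y - inversion x lam z‖) ^ 2 ∧
        (‖z - x‖ / lam * ‖y - inversion x lam z‖) ^ 2 - ‖y - z‖ ^ 2
          ≤ D * (‖y - x‖ - lam) ∧
        (‖z - x‖ / lam * ‖y - inversion x lam z‖) ^ 2 ≤ M := by
    intro lam hlam y hy1 hy2 z hz1 hz2
    have hlam0 : 0 < lam := lt_of_lt_of_le hlamBar hlam.1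
    have hzx : z ≠ x := by
      intro h
      rw [h, sub_self, norm_zero] at hz1
      linarith
    have hAB := AB_diff x hlam0 y z hzx
    set r := ‖y - x‖ with hr
    set s := ‖z - x‖ with hs
    have hr0 : 0 ≤ r := norm_nonneg _
    have hs0 : 0 ≤ s := norm_nonneg _
    have hrl : lam ≤ r := hy1
    have hBle : ‖y - z‖ ^ 2 ≤ 4 * R ^ 2 := by
      have h1 : ‖y - z‖ ≤ ‖y - x‖ + ‖x - z‖ := norm_sub_le_norm_sub_add_norm_sub y x z
      have h2 : ‖x - z‖ = s := by rw [hs, norm_sub_rev]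
      have h3 : 0 ≤ ‖y - z‖ := norm_nonneg _
      nlinarith
    have hlamBar2 : lamBar ^ 2 ≤ lam ^ 2 := by nlinarith [hlam.1]
    have hnum1 : r ^ 2 - lam ^ 2 ≤ 2 * R * (r - lam) := by nlinarith [hlam.2]
    have hnum2 : s ^ 2 - lam ^ 2 ≤ R ^ 2 := by nlinarith
    have hnum2' : 0 ≤ s ^ 2 - lam ^ 2 := by nlinarith
    have hnum1' : 0 ≤ r ^ 2 - lam ^ 2 := by nlinarith
    refine ⟨?_, ?_, ?_⟩
    · have h := div_nonneg (mul_nonneg hnum1' hnum2') (sq_nonneg lam)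
      linarith [hAB]
    · rw [hAB]
      calc (r ^ 2 - lam ^ 2) * (s ^ 2 - lam ^ 2) / lam ^ 2
          ≤ 2 * R * (r - lam) * R ^ 2 / lamBar ^ 2 := by
            apply div_le_div₀ (by nlinarith [hlam.2]) ?_ (by positivity) hlamBar2
            exact mul_le_mul hnum1 hnum2 hnum2' (by nlinarith [hlam.2])
        _ = D * (r - lam) := by rw [hDdef]; ring
    · have h1 : (r ^ 2 - lam ^ 2) * (s ^ 2 - lam ^ 2) / lam ^ 2
          ≤ R ^ 2 * R ^ 2 / lamBar ^ 2 := by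
        apply div_le_div₀ (by positivity) ?_ (by positivity) hlamBar2
        exact mul_le_mul (by nlinarith) hnum2 hnum2' (by positivity)
      linarith [hAB, hBle]
  -- shared integrability of the kernel
  have hKintS : ∀ lam ∈ Set.Icc lamBar R, ∀ y : EuclideanSpace ℝ (Fin n),
      IntegrableOn (fun z => kernelK p x lam y z)
        {z : EuclideanSpace ℝ (Fin n) | lam ≤ ‖z - x‖ ∧ ‖z - x‖ ≤ R} := by
    intro lam hlam y
    have hlam0 : 0 < lam := lt_of_lt_of_le hlamBar hlam.1
    set S := {z : EuclideanSpace ℝ (Fin n) | lam ≤ ‖z - x‖ ∧ ‖z - x‖ ≤ R} with hSdef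
    have hSclosed : IsClosed S := by
      have : S = (fun z : EuclideanSpace ℝ (Fin n) => ‖z - x‖) ⁻¹' Set.Icc lam R := rfl
      rw [this]
      exact IsClosed.preimage ((continuous_id.sub continuous_const).norm) isClosed_Icc
    have hSsub : S ⊆ Metric.closedBall x R := by
      intro z hz
      rw [Metric.mem_closedBall, dist_eq_norm]
      exact hz.2
    have hScompact : IsCompact S :=
      Metric.isCompact_of_isClosed_isBounded hSclosed
        (Metric.isBounded_closedBall.subset hSsub)
    have hzz : ∀ z ∈ S, ‖z - x‖ ≠ 0 := fun z hz =>
      ne_of_gt (lt_of_lt_of_le hlam0 hz.1)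
    have hc : ContinuousOn (fun z => kernelK p x lam y z) S := by
      have heq : (fun z => kernelK p x lam y z) = fun z =>
          (‖z - x‖ / lam) ^ p * ‖y - inversion x lam z‖ ^ p - ‖y - z‖ ^ p := rfl
      rw [heq]
      apply ContinuousOn.sub
      · apply ContinuousOn.mul
        · apply ContinuousOn.rpow_const
          · exact ((continuous_id.sub continuous_const).norm.div_const lam).continuousOn
          · exact fun z _ => Or.inr hp.le
        · apply ContinuousOn.rpow_const
          · apply ContinuousOn.norm
            apply ContinuousOn.sub continuousOn_const
            rw [show (inversion x lam : EuclideanSpace ℝ (Fin n) → EuclideanSpace ℝ (Fin n))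
              = fun z => x + (lam ^ 2 / ‖z - x‖ ^ 2) • (z - x) from rfl]
            apply ContinuousOn.add continuousOn_const
            apply ContinuousOn.smul (f := fun z => lam ^ 2 / ‖z - x‖ ^ 2) (g := fun z => z - x)
            · apply ContinuousOn.div continuousOn_const
              · exact ((continuous_id.sub continuous_const).norm.pow 2).continuousOn
              · exact fun z hz => pow_ne_zero 2 (hzz z hz)
            · exact (continuous_id.sub continuous_const).continuousOn
          · exact fun z _ => Or.inr hp.le
      · exact ((continuous_const.sub continuous_id).norm.rpow_const
          (fun z => Or.inr hp.le)).continuousOn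
    exact hc.integrableOn_compact hScompact
  rcases le_or_gt 1 q with hq1 | hq1
  -- case p ≥ 2
  · set Cvol : ℝ := (volume (Metric.closedBall x R)).toReal with hCvol
    have hCvol0 : 0 ≤ Cvol := ENNReal.toReal_nonneg
    refine ⟨q * M ^ (q - 1) * D * Cvol + 1, by positivity, ?_⟩
    intro lam hlam y hy1 hy2
    set S := {z : EuclideanSpace ℝ (Fin n) | lam ≤ ‖z - x‖ ∧ ‖z - x‖ ≤ R} with hSdef
    have hlam0 : 0 < lam := lt_of_lt_of_le hlamBar hlam.1
    have hSclosed : IsClosed S := by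
      have : S = (fun z : EuclideanSpace ℝ (Fin n) => ‖z - x‖) ⁻¹' Set.Icc lam R := rfl
      rw [this]
      exact IsClosed.preimage ((continuous_id.sub continuous_const).norm) isClosed_Icc
    have hSmeas : MeasurableSet S := hSclosed.measurableSet
    have hSsub : S ⊆ Metric.closedBall x R := fun z hz => by
      rw [Metric.mem_closedBall, dist_eq_norm]; exact hz.2
    have hvolS : volume S ≠ ⊤ :=
      (lt_of_le_of_lt (measure_mono hSsub) measure_closedBall_lt_top).ne
    have hrl : 0 ≤ ‖y - x‖ - lam := by linarith
    have hpoint : ∀ z ∈ S, kernelK p x lam y z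
        ≤ q * M ^ (q - 1) * D * (‖y - x‖ - lam) := by
      intro z hz
      obtain ⟨hBA, hABle, hAM⟩ := hfacts lam hlam y hy1 hy2 z hz.1 hz.2
      set A := (‖z - x‖ / lam * ‖y - inversion x lam z‖) ^ 2 with hA
      set B := ‖y - z‖ ^ 2 with hB
      have hB0 : (0:ℝ) ≤ B := sq_nonneg _
      have hA0 : (0:ℝ) ≤ A := sq_nonneg _
      have hd := kernel_decomp hp x hlam0 y z
      rw [hd]
      calc A ^ q - B ^ q ≤ q * A ^ (q - 1) * (A - B) := bern_ge hq1 hB0 hBA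
        _ ≤ q * M ^ (q - 1) * (D * (‖y - x‖ - lam)) := by
            apply mul_le_mul ?_ hABle (by linarith) (by positivity)
            exact mul_le_mul_of_nonneg_left
              (Real.rpow_le_rpow hA0 hAM (by linarith)) hq0.le
        _ = q * M ^ (q - 1) * D * (‖y - x‖ - lam) := by ring
    calc (∫ z in S, kernelK p x lam y z)
        ≤ ∫ _z in S, q * M ^ (q - 1) * D * (‖y - x‖ - lam) :=
          setIntegral_mono_on (hKintS lam hlam y)
            (integrableOn_const hvolS) hSmeas hpoint
      _ = (volume S).toReal * (q * M ^ (q - 1) * D * (‖y - x‖ - lam)) := by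
          rw [setIntegral_const, smul_eq_mul]; rfl
      _ ≤ Cvol * (q * M ^ (q - 1) * D * (‖y - x‖ - lam)) := by
          apply mul_le_mul_of_nonneg_right ?_ (by positivity)
          exact ENNReal.toReal_mono measure_closedBall_lt_top.ne (measure_mono hSsub)
      _ ≤ (q * M ^ (q - 1) * D * Cvol + 1) * (‖y - x‖ - lam) := by nlinarith [hrl]
  -- case p < 2
  · have hα : (-2:ℝ) < p - 2 := by linarith
    have hα0 : p - 2 < 0 := by
      have : p < 2 := by
        rw [hqdef] at hq1; linarith
      linarith
    set ρ : ℝ := 2 * R + 1 with hρdef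
    have hρ0 : 0 < ρ := by positivity
    have hRiesz := riesz_integrable hn hα hα0 hρ0
    set C₀ : ℝ := ∫ u in Metric.closedBall (0 : EuclideanSpace ℝ (Fin n)) ρ, ‖u‖ ^ (p - 2)
      with hC₀def
    have hC₀0 : 0 ≤ C₀ :=
      setIntegral_nonneg measurableSet_closedBall
        (fun u _ => Real.rpow_nonneg (norm_nonneg u) _)
    refine ⟨q * D * C₀ + 1, by positivity, ?_⟩
    intro lam hlam y hy1 hy2
    set S := {z : EuclideanSpace ℝ (Fin n) | lam ≤ ‖z - x‖ ∧ ‖z - x‖ ≤ R} with hSdef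
    have hlam0 : 0 < lam := lt_of_lt_of_le hlamBar hlam.1
    have hSclosed : IsClosed S := by
      have : S = (fun z : EuclideanSpace ℝ (Fin n) => ‖z - x‖) ⁻¹' Set.Icc lam R := rfl
      rw [this]
      exact IsClosed.preimage ((continuous_id.sub continuous_const).norm) isClosed_Icc
    have hSmeas : MeasurableSet S := hSclosed.measurableSet
    have hrl : 0 ≤ ‖y - x‖ - lam := by linarith
    obtain ⟨hint_y, heq⟩ := riesz_shift y (p - 2) ρ hRiesz
    have hSsub' : S ⊆ Metric.closedBall y ρ := by
      intro z hz
      rw [Metric.mem_closedBall]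
      calc dist z y ≤ dist z x + dist x y := dist_triangle z x y
        _ = ‖z - x‖ + ‖y - x‖ := by rw [dist_eq_norm, dist_eq_norm, norm_sub_rev x y]
        _ ≤ R + R := add_le_add hz.2 hy2
        _ ≤ ρ := by rw [hρdef]; linarith
    have hmaj : IntegrableOn (fun z => ‖y - z‖ ^ (p - 2)) S :=
      hint_y.mono_set hSsub'
    have hmaj' : IntegrableOn
        (fun z => q * D * (‖y - x‖ - lam) * ‖y - z‖ ^ (p - 2)) S :=
      hmaj.const_mul _
    have hae : ∀ᵐ z ∂(volume.restrict S), kernelK p x lam y z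
        ≤ q * D * (‖y - x‖ - lam) * ‖y - z‖ ^ (p - 2) := by
      have h1 : ∀ᵐ z : EuclideanSpace ℝ (Fin n) ∂volume, z ≠ y := by
        haveI : Nonempty (Fin n) := ⟨⟨0, by omega⟩⟩
        haveI : Nontrivial (EuclideanSpace ℝ (Fin n)) := by
          unfold EuclideanSpace PiLp
          infer_instance
        rw [ae_iff]
        simp only [ne_eq, not_not, Set.setOf_eq_eq_singleton]
        exact measure_singleton y
      filter_upwards [ae_restrict_mem hSmeas, ae_restrict_of_ae h1] with z hzS hzy
      obtain ⟨hBA, hABle, hAM⟩ := hfacts lam hlam y hy1 hy2 z hzS.1 hzS.2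
      set A := (‖z - x‖ / lam * ‖y - inversion x lam z‖) ^ 2 with hA
      set B := ‖y - z‖ ^ 2 with hB
      have hBpos : (0:ℝ) < B := by
        have : y - z ≠ 0 := sub_ne_zero.mpr (Ne.symm hzy)
        have := norm_pos_iff.mpr this
        positivity
      have hd := kernel_decomp hp x hlam0 y z
      rw [hd]
      have hpow : B ^ (q - 1) = ‖y - z‖ ^ (p - 2) := by
        rw [hB, rpow_sq_eq (norm_nonneg _)]
        congr 1
        rw [hqdef]; ring
      calc A ^ q - B ^ q ≤ q * B ^ (q - 1) * (A - B) :=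
            bern_le hq0 hq1.le hBpos hBA
        _ ≤ q * B ^ (q - 1) * (D * (‖y - x‖ - lam)) := by
            apply mul_le_mul_of_nonneg_left hABle
            positivity
        _ = q * D * (‖y - x‖ - lam) * ‖y - z‖ ^ (p - 2) := by
            rw [← hpow]; ring
    calc (∫ z in S, kernelK p x lam y z)
        ≤ ∫ z in S, q * D * (‖y - x‖ - lam) * ‖y - z‖ ^ (p - 2) :=
          setIntegral_mono_ae_restrict (hKintS lam hlam y) hmaj' hae
      _ = q * D * (‖y - x‖ - lam) * ∫ z in S, ‖y - z‖ ^ (p - 2) := by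
          rw [integral_const_mul]
      _ ≤ q * D * (‖y - x‖ - lam) * C₀ := by
          apply mul_le_mul_of_nonneg_left ?_ (by positivity)
          rw [hC₀def, ← heq]
          apply setIntegral_mono_set hint_y
          · filter_upwards with z
            exact Real.rpow_nonneg (norm_nonneg _) _
          · exact HasSubset.Subset.eventuallyLE hSsub'
      _ ≤ (q * D * C₀ + 1) * (‖y - x‖ - lam) := by nlinarith [hrl]
end
end

section
/- Let n ≥ 2 be an integer and p > 0. Let u : ℝⁿ ∖ {0} → ℝ be positive and continuous, and suppose that for every x ∈ ℝⁿ ∖ {0}, every λ with 0 < λ < |x|, and every y ∈ ℝⁿ ∖ {0} with |y−x| ≥ λ, one has u(y) ≤ (|y−x|/λ)^p u(x + λ²(y−x)/|y−x|²). Then u is radially symmetric about the origin (u(y) = u(z) whenever y, z ∈ ℝⁿ ∖ {0} and |y| = |z|) and monotone nondecreasing with respect to the origin (for every unit vector e, the map t ↦ u(te) is nondecreasing on (0,∞)). -/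
noncomputable section

open Filter Topology

lemma lim_aux {p a c : ℝ} (hp : 0 < p)
    (h : ∀ τ : ℝ, 1 ≤ τ → a ≤ Real.sqrt (1 + τ⁻¹) ^ p * c) : a ≤ c := by
  have h1 : Tendsto (fun τ : ℝ => Real.sqrt (1 + τ⁻¹) ^ p * c) atTop
      (𝓝 (Real.sqrt (1 + 0) ^ p * c)) := by
    refine Tendsto.mul_const c (Filter.Tendsto.rpow_const ?_ (Or.inr hp.le))
    exact (Real.continuous_sqrt.tendsto _).comp (tendsto_const_nhds.add tendsto_inv_atTop_zero)
  simp only [add_zero, Real.sqrt_one, Real.one_rpow, one_mul] at h1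
  exact ge_of_tendsto h1 (eventually_atTop.2 ⟨1, h⟩)

theorem stmt_14 {n : ℕ} (hn : 2 ≤ n) (p : ℝ) (hp : 0 < p)
    (u : EuclideanSpace ℝ (Fin n) → ℝ)
    (hu_pos : ∀ x : EuclideanSpace ℝ (Fin n), x ≠ 0 → 0 < u x)
    (hu_cont : ContinuousOn u {(0 : EuclideanSpace ℝ (Fin n))}ᶜ)
    (hMS : ∀ x : EuclideanSpace ℝ (Fin n), x ≠ 0 → ∀ lam : ℝ, 0 < lam → lam < ‖x‖ →
      ∀ y : EuclideanSpace ℝ (Fin n), y ≠ 0 → lam ≤ ‖y - x‖ →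
        u y ≤ (‖y - x‖ / lam) ^ p * u (x + (lam ^ 2 / ‖y - x‖ ^ 2) • (y - x))) :
    (∀ y z : EuclideanSpace ℝ (Fin n), y ≠ 0 → z ≠ 0 → ‖y‖ = ‖z‖ → u y = u z) ∧
    (∀ e : EuclideanSpace ℝ (Fin n), ‖e‖ = 1 →
      ∀ s t : ℝ, 0 < s → s ≤ t → u (s • e) ≤ u (t • e)) := by
  -- core inequality
  have core : ∀ (b w : EuclideanSpace ℝ (Fin n)) (τ : ℝ), b ≠ 0 → w ≠ 0 → 1 ≤ τ →
      Real.sqrt (τ * (1 + τ)) * ‖w‖ < ‖b - (1 + τ) • w‖ →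
      u b ≤ Real.sqrt (1 + τ⁻¹) ^ p * u (b - w) := by
    intro b w τ hb hw hτ hlt
    have hτ0 : (0:ℝ) < τ := lt_of_lt_of_le one_pos hτ
    have h1τ : (0:ℝ) < 1 + τ := by linarith
    have hw0 : (0:ℝ) < ‖w‖ := norm_pos_iff.2 hw
    set x : EuclideanSpace ℝ (Fin n) := b - (1 + τ) • w with hxdef
    set lam : ℝ := Real.sqrt (τ * (1 + τ)) * ‖w‖ with hlamdef
    have hlam0 : 0 < lam :=
      mul_pos (Real.sqrt_pos.2 (by positivity)) hw0
    have hx0 : x ≠ 0 := by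
      intro h; rw [h, norm_zero] at hlt; linarith
    have hbx : b - x = (1 + τ) • w := by rw [hxdef]; module
    have hnbx : ‖b - x‖ = (1 + τ) * ‖w‖ := by
      rw [hbx, norm_smul, Real.norm_eq_abs, abs_of_pos h1τ]
    have hlamle : lam ≤ ‖b - x‖ := by
      rw [hnbx, hlamdef]
      have h2 : Real.sqrt (τ * (1 + τ)) ≤ 1 + τ := by
        have := Real.sqrt_le_sqrt (show τ * (1 + τ) ≤ (1 + τ) ^ 2 by nlinarith)
        rwa [Real.sqrt_sq h1τ.le] at this
      exact mul_le_mul_of_nonneg_right h2 hw0.le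
    have key := hMS x hx0 lam hlam0 hlt b hb (hnbx ▸ hlamle)
    have hlamsq : lam ^ 2 = τ * (1 + τ) * ‖w‖ ^ 2 := by
      rw [hlamdef, mul_pow, Real.sq_sqrt (by positivity)]
    have himg : x + (lam ^ 2 / ‖b - x‖ ^ 2) • (b - x) = b - w := by
      rw [hnbx, hlamsq, hbx, mul_pow, smul_smul]
      have hcoef : τ * (1 + τ) * ‖w‖ ^ 2 / ((1 + τ) ^ 2 * ‖w‖ ^ 2) * (1 + τ) = τ := by
        field_simp
      rw [hcoef, hxdef]
      module
    have hfac : ‖b - x‖ / lam = Real.sqrt (1 + τ⁻¹) := by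
      rw [hnbx, hlamdef, mul_div_mul_right _ _ (ne_of_gt hw0),
        show (1:ℝ) + τ⁻¹ = (1 + τ)^2 / (τ * (1 + τ)) by field_simp; ring,
        Real.sqrt_div (by positivity), Real.sqrt_sq h1τ.le]
    rw [himg, hfac] at key
    exact key
  -- symmetric comparison
  have key : ∀ y z : EuclideanSpace ℝ (Fin n), y ≠ 0 → z ≠ 0 → ‖y‖ = ‖z‖ → u z ≤ u y := by
    intro y z hy hz hnorm
    by_cases hyz : y = z
    · subst hyz; exact le_refl _
    apply lim_aux hp
    intro τ hτ
    have hτ0 : (0:ℝ) < τ := lt_of_lt_of_le one_pos hτ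
    have h1τ : (0:ℝ) < 1 + τ := by linarith
    have hw : z - y ≠ 0 := sub_ne_zero.2 (Ne.symm hyz)
    have hzy : z - (z - y) = y := by module
    have hxeq : z - (1 + τ) • (z - y) = y + τ • (y - z) := by module
    have hlt : Real.sqrt (τ * (1 + τ)) * ‖z - y‖ < ‖z - (1 + τ) • (z - y)‖ := by
      rw [hxeq]
      have hd0 : 0 < ‖z - y‖ := norm_pos_iff.2 hw
      have hny : 0 < ‖y‖ := norm_pos_iff.2 hy
      have hnyz : ‖y - z‖ = ‖z - y‖ := by rw [show z - y = -(y - z) by module, norm_neg]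
      have hip : 2 * (inner ℝ y (y - z) : ℝ) = ‖z - y‖ ^ 2 := by
        have h1 : ‖y - z‖ ^ 2 = ‖y‖ ^ 2 - 2 * (inner ℝ y z : ℝ) + ‖z‖ ^ 2 := by
          rw [@norm_sub_sq_real]
        have h2 : (inner ℝ y (y - z) : ℝ) = ‖y‖ ^ 2 - (inner ℝ y z : ℝ) := by
          rw [inner_sub_right, real_inner_self_eq_norm_sq]
        rw [← hnyz, h2, h1, hnorm]; ring
      have hxsq : ‖y + τ • (y - z)‖ ^ 2 = ‖y‖ ^ 2 + τ * (1 + τ) * ‖z - y‖ ^ 2 := by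
        rw [@norm_add_sq_real, real_inner_smul_right, norm_smul, Real.norm_eq_abs,
          abs_of_pos hτ0, mul_pow, hnyz]
        nlinarith [hip]
      have hsq : (Real.sqrt (τ * (1 + τ)) * ‖z - y‖) ^ 2 < ‖y + τ • (y - z)‖ ^ 2 := by
        rw [mul_pow, Real.sq_sqrt (by positivity), hxsq]
        nlinarith
      exact lt_of_pow_lt_pow_left₀ 2 (norm_nonneg _) hsq
    have := core z (z - y) τ hz hw hτ hlt
    rwa [hzy] at this
  constructor
  · intro y z hy hz hnorm
    exact le_antisymm (key z y hz hy hnorm.symm) (key y z hy hz hnorm)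
  · intro e he s t hs hst
    rcases eq_or_lt_of_le hst with rfl | hlt
    · exact le_refl _
    have ht : 0 < t := lt_trans hs hlt
    have hd : 0 < t - s := by linarith
    apply lim_aux hp
    intro τ hτ
    have hτ0 : (0:ℝ) < τ := lt_of_lt_of_le one_pos hτ
    have h1τ : (0:ℝ) < 1 + τ := by linarith
    have he0 : e ≠ 0 := by intro h; rw [h, norm_zero] at he; norm_num at he
    have hb : s • e ≠ 0 := smul_ne_zero (ne_of_gt hs) he0
    have hw : (s - t) • e ≠ 0 := smul_ne_zero (by intro h; linarith [sub_eq_zero.1 h]) he0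
    have himg : s • e - (s - t) • e = t • e := by module
    have hxeq : s • e - (1 + τ) • ((s - t) • e) = (t + τ * (t - s)) • e := by module
    have hlt2 : Real.sqrt (τ * (1 + τ)) * ‖(s - t) • e‖ < ‖s • e - (1 + τ) • (s - t) • e‖ := by
      rw [show s • e - (1 + τ) • (s - t) • e = (t + τ * (t - s)) • e from hxeq,
        norm_smul, norm_smul, he, mul_one, mul_one, Real.norm_eq_abs,
        Real.norm_eq_abs, abs_of_pos (show (0:ℝ) < t + τ * (t - s) by nlinarith),
        abs_of_neg (show s - t < 0 by linarith)]
      have hsq : (Real.sqrt (τ * (1 + τ)) * -(s - t)) ^ 2 < (t + τ * (t - s)) ^ 2 := by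
        rw [mul_pow, Real.sq_sqrt (by positivity)]
        nlinarith [mul_pos hτ0 (mul_pos hd (show (0:ℝ) < t + s by linarith)), sq_nonneg t]
      exact lt_of_pow_lt_pow_left₀ 2 (by nlinarith) hsq
    have := core (s • e) ((s - t) • e) τ hb hw hτ hlt2
    rwa [himg] at this
end
end

section
/- Let n ≥ 2 be an integer, p > 0 and λ > 0. Let ξ, z ∈ ℝⁿ with |ξ| = λ, z ≠ 0 and z ≠ ξ. Then K(0,λ;ξ,z) = 0, the map η ↦ K(0,λ;η,z) is differentiable at ξ, and its radial derivative satisfies ⟨∇_ξ K(0,λ;ξ,z), ξ⟩ = p |ξ−z|^{p−2} (|z|² − λ²). -/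
open RealInnerProductSpace

noncomputable section

lemma my_hasFDerivAt_norm_rpow {E : Type*} [NormedAddCommGroup E] [InnerProductSpace ℝ E]
    (x : E) (p : ℝ) (hx : x ≠ 0) :
    HasFDerivAt (fun x : E ↦ ‖x‖ ^ p) ((p * ‖x‖ ^ (p - 2)) • innerSL ℝ x) x := by
  apply HasStrictFDerivAt.hasFDerivAt
  convert (hasStrictFDerivAt_norm_sq x).rpow_const (p := p / 2) (by simp [hx]) using 0
  simp_rw [← Real.rpow_natCast_mul (norm_nonneg _), ← Nat.cast_smul_eq_nsmul ℝ, smul_smul]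
  ring_nf

lemma my_hasFDerivAt_norm_sub_rpow {E : Type*} [NormedAddCommGroup E] [InnerProductSpace ℝ E]
    (a x : E) (p : ℝ) (hx : x ≠ a) :
    HasFDerivAt (fun η : E ↦ ‖η - a‖ ^ p)
      ((p * ‖x - a‖ ^ (p - 2)) • innerSL ℝ (x - a)) x := by
  have h := (my_hasFDerivAt_norm_rpow (x - a) p (sub_ne_zero.mpr hx)).comp x
    ((hasFDerivAt_id x).sub_const a)
  rw [ContinuousLinearMap.comp_id] at h
  exact h

theorem stmt_15 {n : ℕ} (hn : 2 ≤ n) (p : ℝ) (hp : 0 < p)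
    (lam : ℝ) (hlam : 0 < lam)
    (ξ z : EuclideanSpace ℝ (Fin n)) (hξ : ‖ξ‖ = lam) (hz : z ≠ 0) (hzξ : z ≠ ξ) :
    kernelK p (0 : EuclideanSpace ℝ (Fin n)) lam ξ z = 0 ∧
    DifferentiableAt ℝ
      (fun η : EuclideanSpace ℝ (Fin n) =>
        kernelK p (0 : EuclideanSpace ℝ (Fin n)) lam η z) ξ ∧
    ⟪gradient
        (fun η : EuclideanSpace ℝ (Fin n) =>
          kernelK p (0 : EuclideanSpace ℝ (Fin n)) lam η z) ξ, ξ⟫ =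
      p * ‖ξ - z‖ ^ (p - 2) * (‖z‖ ^ 2 - lam ^ 2) := by
  have hz0 : ‖z‖ ≠ 0 := norm_ne_zero_iff.mpr hz
  have hz0' : (0:ℝ) < ‖z‖ := norm_pos_iff.mpr hz
  have hξz : ξ ≠ z := fun h => hzξ h.symm
  set b : EuclideanSpace ℝ (Fin n) := inversion 0 lam z with hb
  have hb_def : b = (lam ^ 2 / ‖z‖ ^ 2) • z := by simp [hb, inversion]
  have hc : (0:ℝ) < lam ^ 2 / ‖z‖ ^ 2 := by positivity
  -- norm identity
  have e2 : ‖ξ - z‖ ^ 2 = lam ^ 2 - 2 * ⟪ξ, z⟫ + ‖z‖ ^ 2 := by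
    rw [@norm_sub_sq_real, hξ]
  have h1 : ‖ξ - b‖ ^ 2 = (lam / ‖z‖ * ‖ξ - z‖) ^ 2 := by
    rw [hb_def, @norm_sub_sq_real, real_inner_smul_right, norm_smul, hξ, mul_pow, mul_pow, e2,
      Real.norm_eq_abs, abs_of_pos hc]
    field_simp
    ring
  have hnb : ‖ξ - b‖ = lam / ‖z‖ * ‖ξ - z‖ := by
    calc ‖ξ - b‖ = √(‖ξ - b‖ ^ 2) := (Real.sqrt_sq (norm_nonneg _)).symm
      _ = √((lam / ‖z‖ * ‖ξ - z‖) ^ 2) := by rw [h1]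
      _ = lam / ‖z‖ * ‖ξ - z‖ := Real.sqrt_sq (by positivity)
  have hrz : (0:ℝ) < ‖ξ - z‖ := by
    rw [norm_pos_iff]; exact sub_ne_zero.mpr hξz
  have hξb : ξ ≠ b := by
    intro h
    rw [sub_eq_zero.mpr h, norm_zero] at hnb
    exact absurd hnb.symm (by positivity)
  -- Part 1
  have K0 : kernelK p 0 lam ξ z = 0 := by
    simp only [kernelK, sub_zero, ← hb]
    rw [hnb, Real.mul_rpow (by positivity) (norm_nonneg _), ← mul_assoc,
      ← Real.mul_rpow (by positivity) (by positivity)]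
    have h11 : ‖z‖ / lam * (lam / ‖z‖) = 1 := by field_simp
    rw [h11, Real.one_rpow, one_mul, sub_self]
  -- Derivative
  have hD : HasFDerivAt (fun η : EuclideanSpace ℝ (Fin n) => kernelK p 0 lam η z)
      ((‖z‖ / lam) ^ p • ((p * ‖ξ - b‖ ^ (p - 2)) • innerSL ℝ (ξ - b)) -
        (p * ‖ξ - z‖ ^ (p - 2)) • innerSL ℝ (ξ - z)) ξ := by
    simp only [kernelK, sub_zero, ← hb]
    exact ((my_hasFDerivAt_norm_sub_rpow b ξ p hξb).const_mul _).sub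
      (my_hasFDerivAt_norm_sub_rpow z ξ p hξz)
  have hgrad := hasFDerivAt_iff_hasGradientAt.mp hD
  refine ⟨K0, hgrad.differentiableAt, ?_⟩
  rw [hgrad.gradient, InnerProductSpace.toDual_symm_apply]
  simp only [ContinuousLinearMap.sub_apply, ContinuousLinearMap.smul_apply, innerSL_apply_apply,
    smul_eq_mul]
  have hib : ⟪ξ - b, ξ⟫ = lam ^ 2 - lam ^ 2 / ‖z‖ ^ 2 * ⟪z, ξ⟫ := by
    rw [hb_def, inner_sub_left, real_inner_smul_left, real_inner_self_eq_norm_sq, hξ]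
  have hiz : ⟪ξ - z, ξ⟫ = lam ^ 2 - ⟪z, ξ⟫ := by
    rw [inner_sub_left, real_inner_self_eq_norm_sq, hξ]
  have hA : (‖z‖ / lam) ^ p * (lam / ‖z‖ * ‖ξ - z‖) ^ (p - 2) =
      ‖z‖ ^ 2 / lam ^ 2 * ‖ξ - z‖ ^ (p - 2) := by
    rw [Real.mul_rpow (by positivity) (norm_nonneg _), ← mul_assoc]
    congr 1
    have hs : (0:ℝ) < lam / ‖z‖ := by positivity
    rw [show ‖z‖ / lam = (lam / ‖z‖)⁻¹ from (inv_div lam ‖z‖).symm,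
      ← Real.rpow_neg_one (lam / ‖z‖), ← Real.rpow_mul hs.le, ← Real.rpow_add hs,
      show -1 * p + (p - 2) = -(2:ℝ) by ring, Real.rpow_neg hs.le,
      show ((2:ℝ)) = ((2:ℕ):ℝ) by norm_num, Real.rpow_natCast, div_pow, inv_div]
  have key : (lam / ‖z‖ * ‖ξ - z‖) ^ (p - 2) * (‖z‖ / lam) ^ p *
      (lam ^ 2 - lam ^ 2 / ‖z‖ ^ 2 * ⟪z, ξ⟫) =
      ‖ξ - z‖ ^ (p - 2) * (‖z‖ ^ 2 - ⟪z, ξ⟫) := by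
    rw [mul_comm ((lam / ‖z‖ * ‖ξ - z‖) ^ (p - 2)), hA]
    field_simp
  rw [hnb, hib, hiz]
  linear_combination p * key
end
end

section
/- Let n ≥ 2 be an integer, p > 0, λ̄ > 0 and δ̄ ∈ (0,1). There exists a constant C > 0 such that for every λ ∈ [λ̄, λ̄ + δ̄], every ξ ∈ ℝⁿ with λ ≤ |ξ| ≤ λ̄ + δ̄, and every z ∈ ℝⁿ with λ̄ + 2 ≤ |z| ≤ λ̄ + 3, one has K(0,λ;ξ,z) ≥ C (|ξ| − λ). -/
set_option maxHeartbeats 1000000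


noncomputable section

lemma rpow_sub_ge (p M : ℝ) (hp : 0 < p) {A B : ℝ} (hB : 1 ≤ B)
    (hBA : B ≤ A) (hAM : A ≤ M) :
    p * min 1 (M ^ (p - 1)) * (A - B) ≤ A ^ p - B ^ p := by
  rcases eq_or_lt_of_le hBA with rfl | hlt
  · rw [sub_self, sub_self, mul_zero]
  have hder : ∀ x ∈ Set.Ioo B A, HasDerivAt (fun t : ℝ => t ^ p) (p * x ^ (p - 1)) x := by
    intro x hx
    exact Real.hasDerivAt_rpow_const (Or.inl (by nlinarith [hx.1]))
  have hcont : ContinuousOn (fun t : ℝ => t ^ p) (Set.Icc B A) := by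
    intro x hx
    have hx0 : x ≠ 0 := by nlinarith [hx.1]
    exact (Real.hasDerivAt_rpow_const (p := p) (Or.inl hx0)).continuousAt.continuousWithinAt
  obtain ⟨c, hc, hceq⟩ := exists_hasDerivAt_eq_slope (fun t : ℝ => t ^ p)
    (fun x => p * x ^ (p - 1)) hlt hcont hder
  have hc1 : 1 ≤ c := le_of_lt (lt_of_le_of_lt hB hc.1)
  have hcM : c ≤ M := le_trans (le_of_lt hc.2) hAM
  have heq : A ^ p - B ^ p = p * c ^ (p - 1) * (A - B) := by
    have hAB : A - B ≠ 0 := by linarith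
    rw [eq_div_iff hAB] at hceq
    linarith [hceq]
  rw [heq]
  have hmin : min 1 (M ^ (p - 1)) ≤ c ^ (p - 1) := by
    rcases le_or_gt 1 p with h1 | h1
    · exact le_trans (min_le_left _ _) (Real.one_le_rpow hc1 (by linarith))
    · exact le_trans (min_le_right _ _)
        (Real.rpow_le_rpow_of_nonpos (by linarith) hcM (by linarith))
  have : p * min 1 (M ^ (p - 1)) ≤ p * c ^ (p - 1) :=
    mul_le_mul_of_nonneg_left hmin hp.le
  nlinarith [this, sub_pos.mpr hlt]

lemma auxA (NA l a w t : ℝ) (hl : 0 < l) (ha : 0 ≤ a) (hw : 0 ≤ w) (hNA : 0 ≤ NA)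
    (hNA2 : NA ^ 2 * l ^ 2 = a ^ 2 * w ^ 2 - 2 * t * l ^ 2 + l ^ 4)
    (ht : -(a * w) ≤ t) : NA * l ≤ a * w + l ^ 2 := by
  have hsq : (NA * l) ^ 2 ≤ (a * w + l ^ 2) ^ 2 := by
    nlinarith [mul_nonneg (mul_nonneg hl.le hl.le) (by linarith : (0:ℝ) ≤ a * w + t)]
  exact (pow_le_pow_iff_left₀ (by positivity) (by positivity) two_ne_zero).mp hsq

lemma auxAM (NA l a w L X : ℝ) (hL : 0 < L) (hl0 : 0 < l)
    (hNAl : NA * l ≤ a * w + l ^ 2) (haw : a * w ≤ X * L) (hLl : L ≤ l)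
    (hl2 : l ≤ L + 1) (hX0 : 0 ≤ X) : NA ≤ X + (L + 1) + (L + 3) := by
  have h4 : NA * l ≤ (X + (L + 1) + (L + 3)) * l := by
    nlinarith [mul_nonneg hX0 (sub_nonneg.mpr hLl), mul_nonneg hl0.le (by linarith : (0:ℝ) ≤ 2 * L + 4 - l)]
  exact le_of_mul_le_mul_right h4 hl0

lemma auxB (u l L M : ℝ) (hu0 : 0 ≤ u) (hu : u ≤ 2 * M) (hl0 : 0 < l)
    (hl : l ≤ L + 1) (hL : 0 < L) (hM : 1 ≤ M) : u * l ^ 2 ≤ (L + 1) ^ 2 * (2 * M) := by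
  calc u * l ^ 2 ≤ (2 * M) * l ^ 2 := mul_le_mul_of_nonneg_right hu (sq_nonneg l)
    _ ≤ (2 * M) * (L + 1) ^ 2 := mul_le_mul_of_nonneg_left
        (pow_le_pow_left₀ hl0.le hl 2) (by linarith)
    _ = (L + 1) ^ 2 * (2 * M) := by ring

lemma auxC (a l w L : ℝ) (hL : 0 < L) (hLl : L ≤ l) (hla : l ≤ a)
    (hl2 : l ≤ L + 1) (hw : L + 2 ≤ w) :
    2 * L * (2 * L + 3) * (a - l) ≤ (a ^ 2 - l ^ 2) * (w ^ 2 - l ^ 2) := by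
  have e1 : (a - l) * (2 * L) ≤ a ^ 2 - l ^ 2 := by nlinarith
  have e2 : 2 * L + 3 ≤ w ^ 2 - l ^ 2 := by nlinarith
  have e3 : (0:ℝ) ≤ a ^ 2 - l ^ 2 := by nlinarith
  nlinarith [mul_le_mul e1 e2 (by linarith) e3]


theorem stmt_16 {n : ℕ} (hn : 2 ≤ n) (p : ℝ) (hp : 0 < p)
    (lamBar delBar : ℝ) (hlamBar : 0 < lamBar) (hdelBar : delBar ∈ Set.Ioo (0 : ℝ) 1) :
    ∃ C : ℝ, 0 < C ∧
      ∀ lam ∈ Set.Icc lamBar (lamBar + delBar),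
        ∀ ξ : EuclideanSpace ℝ (Fin n), lam ≤ ‖ξ‖ → ‖ξ‖ ≤ lamBar + delBar →
          ∀ z : EuclideanSpace ℝ (Fin n), lamBar + 2 ≤ ‖z‖ → ‖z‖ ≤ lamBar + 3 →
            C * (‖ξ‖ - lam) ≤ kernelK p (0 : EuclideanSpace ℝ (Fin n)) lam ξ z := by
  obtain ⟨hD0, hD1⟩ := hdelBar
  set L := lamBar with hL
  set X : ℝ := (L + 1) * (L + 3) / L with hXdef
  have hX : X * L = (L + 1) * (L + 3) := by
    rw [hXdef]; field_simp
  have hX0 : 0 < X := by positivity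
  set M : ℝ := X + (L + 1) + (L + 3) with hMdef
  have hM1 : 1 ≤ M := by nlinarith
  set m : ℝ := min 1 (M ^ (p - 1)) with hmdef
  have hm0 : 0 < m := lt_min one_pos (Real.rpow_pos_of_pos (by linarith) _)
  set c₂ : ℝ := (2 * L * (2 * L + 3)) / ((L + 1) ^ 2 * (2 * M)) with hc2def
  have hDd : (0:ℝ) < (L + 1) ^ 2 * (2 * M) := by nlinarith
  have hc20 : 0 < c₂ := div_pos (by nlinarith) hDd
  refine ⟨p * m * c₂, by positivity, ?_⟩
  rintro lam ⟨hl1, hl2⟩ ξ ha1 ha2 z hw1 hw2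
  set a := ‖ξ‖ with hadef
  set w := ‖z‖ with hwdef
  set l := lam with hldef
  have hl0 : 0 < l := lt_of_lt_of_le hlamBar hl1
  have hw0 : 0 < w := by linarith
  have ha0 : 0 ≤ a := norm_nonneg _
  have hl2' : l ≤ L + 1 := by linarith
  have ha2' : a ≤ L + 1 := by linarith
  have hinv : inversion (0 : EuclideanSpace ℝ (Fin n)) l z = (l ^ 2 / w ^ 2) • z := by
    simp [inversion, hwdef]
  set t : ℝ := inner ℝ ξ z with htdef
  have hCS : |t| ≤ a * w := abs_real_inner_le_norm ξ z
  have h2 : ‖ξ - z‖ ^ 2 = a ^ 2 - 2 * t + w ^ 2 := by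
    rw [norm_sub_sq_real]
  have hinvsq : ‖ξ - inversion (0 : EuclideanSpace ℝ (Fin n)) l z‖ ^ 2
      = a ^ 2 - 2 * (l ^ 2 / w ^ 2) * t + (l ^ 2 / w ^ 2) ^ 2 * w ^ 2 := by
    rw [hinv, norm_sub_sq_real, real_inner_smul_right, norm_smul]
    rw [Real.norm_eq_abs, abs_of_nonneg (by positivity)]
    rw [← htdef, ← hwdef, ← hadef]
    ring_nf
  set NA : ℝ := (w / l) * ‖ξ - inversion (0 : EuclideanSpace ℝ (Fin n)) l z‖ with hNAdef
  set NB : ℝ := ‖ξ - z‖ with hNBdef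
  have hNA0 : 0 ≤ NA := by positivity
  have hNB0 : 0 ≤ NB := norm_nonneg _
  have hNA2 : NA ^ 2 * l ^ 2 = a ^ 2 * w ^ 2 - 2 * t * l ^ 2 + l ^ 4 := by
    rw [hNAdef]
    have hwne : w ≠ 0 := ne_of_gt hw0
    have hlne : l ≠ 0 := ne_of_gt hl0
    field_simp [mul_pow]
    rw [hinvsq]
    field_simp
  have hK : kernelK p (0 : EuclideanSpace ℝ (Fin n)) l ξ z = NA ^ p - NB ^ p := by
    rw [kernelK, sub_zero, hNAdef]
    rw [Real.mul_rpow (by positivity) (norm_nonneg _)]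
  have hNB1 : 1 ≤ NB := by
    have := norm_sub_norm_le z ξ
    rw [norm_sub_rev z ξ] at this
    rw [hNBdef]
    calc (1:ℝ) ≤ w - a := by linarith
    _ ≤ ‖ξ - z‖ := this
  have hl2sq : (0:ℝ) < l ^ 2 := by positivity
  have h2' : NB ^ 2 = a ^ 2 - 2 * t + w ^ 2 := h2
  have key : NA ^ 2 * l ^ 2 - NB ^ 2 * l ^ 2 = (a ^ 2 - l ^ 2) * (w ^ 2 - l ^ 2) := by
    linear_combination hNA2 - l ^ 2 * h2'
  have hBA : NB ≤ NA := by
    have hfac : (0:ℝ) ≤ (a ^ 2 - l ^ 2) * (w ^ 2 - l ^ 2) :=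
      mul_nonneg (sub_nonneg.mpr (pow_le_pow_left₀ hl0.le ha1 2))
        (sub_nonneg.mpr (pow_le_pow_left₀ hl0.le (by linarith) 2))
    have hsq : NB ^ 2 * l ^ 2 ≤ NA ^ 2 * l ^ 2 := by linarith
    have hsq2 : NB ^ 2 ≤ NA ^ 2 := le_of_mul_le_mul_right hsq hl2sq
    exact (pow_le_pow_iff_left₀ hNB0 hNA0 two_ne_zero).mp hsq2
  have hNAl : NA * l ≤ a * w + l ^ 2 :=
    auxA NA l a w t hl0 ha0 hw0.le hNA0 hNA2 (abs_le.mp hCS).1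
  have haw : a * w ≤ X * L := by
    rw [hX]; exact mul_le_mul ha2' hw2 hw0.le (by linarith)
  have hAM : NA ≤ M := by
    rw [hMdef]
    exact auxAM NA l a w L X hlamBar hl0 hNAl haw hl1 hl2' hX0.le
  have key' : (NA - NB) * ((NA + NB) * l ^ 2) = (a ^ 2 - l ^ 2) * (w ^ 2 - l ^ 2) := by
    linear_combination key
  have hstep : c₂ * (a - l) ≤ NA - NB := by
    rw [hc2def, div_mul_eq_mul_div, div_le_iff₀ hDd]
    have hs0 : 0 ≤ NA - NB := by linarith
    have h1 : (NA - NB) * ((NA + NB) * l ^ 2) ≤ (NA - NB) * ((L + 1) ^ 2 * (2 * M)) :=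
      mul_le_mul_of_nonneg_left
        (auxB (NA + NB) l L M (by linarith) (by linarith [le_trans hBA hAM]) hl0 hl2' hlamBar hM1)
        hs0
    have h3 : 2 * L * (2 * L + 3) * (a - l) ≤ (a ^ 2 - l ^ 2) * (w ^ 2 - l ^ 2) :=
      auxC a l w L hlamBar hl1 ha1 hl2' hw1
    linarith [key', h1, h3]
  have hmain := rpow_sub_ge p M hp hNB1 hBA hAM
  rw [hK]
  calc p * m * c₂ * (a - l) = (p * m) * (c₂ * (a - l)) := by ring
    _ ≤ (p * m) * (NA - NB) := mul_le_mul_of_nonneg_left hstep (by positivity)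
    _ ≤ NA ^ p - NB ^ p := hmain
end
end
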